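/- arXiv:2508.11444 — 6 statements merged into one kernel-verified Lean document; each statement's English description precedes it below -/
import Mathlib

section
/- Every 2-connected graph (with at least one edge) admits an ear decomposition: a sequence of paths P_1,...,P_f such that every edge belongs to exactly one path, P_1 is a single edge, and for i>1, P_i is a path with at least one edge whose two distinct endpoints lie in the union of vertices of the previous paths while all its internal vertices are new. -/
/-- A graph is 2-connected: connected, at least 2 vertices, and no
cutvertex (no vertex whose removal disconnects the graph). -/
def TwoConnected {W : Type} (H : SimpleGraph W) : Prop :=
  H.Connected ∧ 2 ≤ Nat.card W ∧ ∀ w : W, (H.induce {u | u ≠ w}).Connected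

/-- An ear decomposition of `G`: a sequence of paths (`ears`)
`P_0, …, P_{f-1}` in `G` such that every edge of `G` belongs to exactly
one ear, the first ear is a single edge, and each later ear is a path
with at least one edge whose two distinct endpoints lie among the
vertices of the previous ears, while all its internal vertices are new. -/
structure EarDecomposition {V : Type} (G : SimpleGraph V) where
  f : ℕ
  hf : 0 < f
  src : Fin f → V
  tgt : Fin f → V
  ear : ∀ i : Fin f, G.Walk (src i) (tgt i)
  isPath : ∀ i, (ear i).IsPath
  /-- every vertex of `G` belongs to some ear -/
  vertexCover : ∀ v : V, ∃ i : Fin f, v ∈ (ear i).support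
  /-- every edge of `G` belongs to exactly one ear -/
  cover : ∀ e ∈ G.edgeSet, ∃! i : Fin f, e ∈ (ear i).edges
  /-- the first ear is a single edge -/
  firstSingle : (ear ⟨0, hf⟩).length = 1
  /-- later ears have at least one edge -/
  earNonempty : ∀ i : Fin f, 0 < i.val → 0 < (ear i).length
  /-- later ears have two distinct endpoints -/
  distinctEnds : ∀ i : Fin f, 0 < i.val → src i ≠ tgt i
  /-- the endpoints of a later ear lie among the vertices of previous ears -/
  srcOld : ∀ i : Fin f, 0 < i.val → ∃ j : Fin f, j < i ∧ src i ∈ (ear j).support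
  tgtOld : ∀ i : Fin f, 0 < i.val → ∃ j : Fin f, j < i ∧ tgt i ∈ (ear j).support
  /-- internal vertices of a later ear are new -/
  internalNew : ∀ i : Fin f, 0 < i.val → ∀ v ∈ (ear i).support,
    v ≠ src i → v ≠ tgt i → ∀ j : Fin f, j < i → v ∉ (ear j).support



open SimpleGraph

namespace EarAux

variable {V : Type} {G : SimpleGraph V}

/-- An "ear" bundled with its endpoints. -/
def EarOf (G : SimpleGraph V) : Type := Σ x : V, Σ y : V, G.Walk x y

lemma path_ne_of_length_pos {u v : V} {p : G.Walk u v} (hp : p.IsPath)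
    (hl : 0 < p.length) : u ≠ v := by
  rintro rfl
  rw [SimpleGraph.Walk.isPath_iff_eq_nil] at hp
  subst hp
  simp at hl

/-- hom from induced subgraph back to ambient graph -/
def outHom (s : Set V) : G.induce s →g G := ⟨Subtype.val, fun h => h⟩

lemma exists_crossing {S : Set V} {a b : V} (w : G.Walk a b) (ha : a ∈ S) (hb : b ∉ S) :
    ∃ u v, G.Adj u v ∧ u ∈ S ∧ v ∉ S := by
  induction w with
  | nil => exact absurd ha hb
  | @cons a c b h p ih =>
    by_cases hc : c ∈ S
    · exact ih hc hb
    · exact ⟨a, c, h, ha, hc⟩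

lemma exists_prefix_to_set {S : Set V} {a b : V} (w : G.Walk a b) (hb : b ∈ S) :
    ∃ z, z ∈ S ∧ ∃ q : G.Walk a z, (∀ v ∈ q.support, v ∈ w.support) ∧
      (∀ v ∈ q.support, v ≠ z → v ∉ S) := by
  induction w with
  | nil =>
    exact ⟨_, hb, Walk.nil, by simp, by simp⟩
  | @cons a c b h p ih =>
    by_cases ha : a ∈ S
    · exact ⟨a, ha, Walk.nil, by simp, by simp⟩
    · obtain ⟨z, hz, q, hsub, hns⟩ := ih hb
      refine ⟨z, hz, Walk.cons h q, ?_, ?_⟩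
      · intro v hv
        rw [Walk.support_cons, List.mem_cons] at hv
        rcases hv with rfl | hv
        · simp
        · rw [Walk.support_cons, List.mem_cons]; exact Or.inr (hsub v hv)
      · intro v hv hvz
        rw [Walk.support_cons, List.mem_cons] at hv
        rcases hv with rfl | hv
        · exact ha
        · exact hns v hv hvz

lemma edges_endpoint_not_mem {S : Set V} {a z : V} (q : G.Walk a z) (hq : q.IsPath)
    (hS : ∀ v ∈ q.support, v ≠ z → v ∉ S) : ∀ e ∈ q.edges, ∃ u, u ∈ e ∧ u ∉ S := by
  induction q with
  | nil => simp
  | @cons a c z h p ih =>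
    intro e he
    rw [Walk.edges_cons, List.mem_cons] at he
    rw [Walk.cons_isPath_iff] at hq
    rcases he with rfl | he
    · refine ⟨a, by simp, ?_⟩
      refine hS a (by simp) ?_
      intro haz
      exact hq.2 (haz ▸ p.end_mem_support)
    · refine ih hq.1 ?_ e he
      intro v hv hvz
      refine hS v ?_ hvz
      rw [Walk.support_cons, List.mem_cons]; exact Or.inr hv

/-- partial ear decomposition -/
structure PED (G : SimpleGraph V) where
  f : ℕ
  hf : 0 < f
  ears : Fin f → EarOf G
  isPath : ∀ i, (ears i).2.2.IsPath
  disj : ∀ i j : Fin f, i ≠ j → ∀ e ∈ (ears i).2.2.edges, e ∉ (ears j).2.2.edges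
  firstSingle : (ears ⟨0, hf⟩).2.2.length = 1
  earNonempty : ∀ i : Fin f, 0 < i.val → 0 < (ears i).2.2.length
  distinctEnds : ∀ i : Fin f, 0 < i.val → (ears i).1 ≠ (ears i).2.1
  srcOld : ∀ i : Fin f, 0 < i.val → ∃ j : Fin f, j < i ∧ (ears i).1 ∈ (ears j).2.2.support
  tgtOld : ∀ i : Fin f, 0 < i.val → ∃ j : Fin f, j < i ∧ (ears i).2.1 ∈ (ears j).2.2.support
  internalNew : ∀ i : Fin f, 0 < i.val → ∀ v ∈ (ears i).2.2.support,
    v ≠ (ears i).1 → v ≠ (ears i).2.1 → ∀ j : Fin f, j < i → v ∉ (ears j).2.2.support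

def PED.covered (P : PED G) : Set (Sym2 V) := {e | ∃ i, e ∈ (P.ears i).2.2.edges}

def PED.S (P : PED G) : Set V := {v | ∃ i, v ∈ (P.ears i).2.2.support}

lemma PED.covered_subset (P : PED G) : P.covered ⊆ G.edgeSet := by
  rintro e ⟨i, hi⟩
  exact Walk.edges_subset_edgeSet _ hi

lemma PED.mem_S_of_mem_covered (P : PED G) : ∀ e ∈ P.covered, ∀ v ∈ e, v ∈ P.S := by
  intro e
  induction e using Sym2.ind with
  | _ u w =>
    rintro ⟨i, hi⟩ v hv
    rw [Sym2.mem_iff] at hv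
    rcases hv with rfl | rfl
    · exact ⟨i, Walk.fst_mem_support_of_mem_edges _ hi⟩
    · exact ⟨i, Walk.snd_mem_support_of_mem_edges _ hi⟩

lemma PED.exists_S_ne (P : PED G) (x : V) : ∃ s, s ∈ P.S ∧ s ≠ x := by
  have hne : (P.ears ⟨0, P.hf⟩).1 ≠ (P.ears ⟨0, P.hf⟩).2.1 :=
    path_ne_of_length_pos (P.isPath _) (by rw [P.firstSingle]; exact Nat.one_pos)
  by_cases h : (P.ears ⟨0, P.hf⟩).1 = x
  · exact ⟨(P.ears ⟨0, P.hf⟩).2.1, ⟨_, Walk.end_mem_support _⟩, by rw [← h]; exact hne.symm⟩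
  · exact ⟨(P.ears ⟨0, P.hf⟩).1, ⟨_, Walk.start_mem_support _⟩, h⟩

lemma PED.S_nonempty (P : PED G) : P.S.Nonempty :=
  ⟨(P.ears ⟨0, P.hf⟩).1, ⟨_, Walk.start_mem_support _⟩⟩

lemma PED.extend (P : PED G) (E : EarOf G) (hpath : E.2.2.IsPath)
    (hlen : 0 < E.2.2.length) (hne : E.1 ≠ E.2.1)
    (hsrc : E.1 ∈ P.S) (htgt : E.2.1 ∈ P.S)
    (hint : ∀ v ∈ E.2.2.support, v ≠ E.1 → v ≠ E.2.1 → v ∉ P.S)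
    (hnew : ∀ e ∈ E.2.2.edges, e ∉ P.covered) :
    ∃ P' : PED G, P'.covered = P.covered ∪ {e | e ∈ E.2.2.edges} := by
  have h0 : (⟨0, Nat.succ_pos P.f⟩ : Fin (P.f + 1)) = Fin.castSucc ⟨0, P.hf⟩ := rfl
  refine ⟨⟨P.f + 1, Nat.succ_pos _, Fin.snoc P.ears E, ?_, ?_, ?_, ?_, ?_, ?_, ?_, ?_⟩, ?_⟩
  · -- isPath
    intro i
    induction i using Fin.lastCases with
    | last => rw [Fin.snoc_last]; exact hpath
    | cast j => rw [Fin.snoc_castSucc]; exact P.isPath j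
  · -- disj
    intro i j hij e hei hej
    induction i using Fin.lastCases with
    | last =>
      rw [Fin.snoc_last] at hei
      induction j using Fin.lastCases with
      | last => exact hij rfl
      | cast m =>
        rw [Fin.snoc_castSucc] at hej
        exact hnew e hei ⟨m, hej⟩
    | cast k =>
      rw [Fin.snoc_castSucc] at hei
      induction j using Fin.lastCases with
      | last =>
        rw [Fin.snoc_last] at hej
        exact hnew e hej ⟨k, hei⟩
      | cast m =>
        rw [Fin.snoc_castSucc] at hej
        exact P.disj k m (fun h => hij (by rw [h])) e hei hej
  · -- firstSingle
    rw [h0, Fin.snoc_castSucc]; exact P.firstSingle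
  · -- earNonempty
    intro i hi
    induction i using Fin.lastCases with
    | last => rw [Fin.snoc_last]; exact hlen
    | cast j => rw [Fin.snoc_castSucc]; exact P.earNonempty j hi
  · -- distinctEnds
    intro i hi
    induction i using Fin.lastCases with
    | last => rw [Fin.snoc_last]; exact hne
    | cast j => rw [Fin.snoc_castSucc]; exact P.distinctEnds j hi
  · -- srcOld
    intro i hi
    induction i using Fin.lastCases with
    | last =>
      rw [Fin.snoc_last]
      obtain ⟨j, hj⟩ := hsrc
      exact ⟨Fin.castSucc j, Fin.castSucc_lt_last j, by rw [Fin.snoc_castSucc]; exact hj⟩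
    | cast k =>
      rw [Fin.snoc_castSucc]
      obtain ⟨j, hjk, hj⟩ := P.srcOld k hi
      exact ⟨Fin.castSucc j, by
        exact (Fin.castSucc_lt_castSucc_iff).mpr hjk, by rw [Fin.snoc_castSucc]; exact hj⟩
  · -- tgtOld
    intro i hi
    induction i using Fin.lastCases with
    | last =>
      rw [Fin.snoc_last]
      obtain ⟨j, hj⟩ := htgt
      exact ⟨Fin.castSucc j, Fin.castSucc_lt_last j, by rw [Fin.snoc_castSucc]; exact hj⟩
    | cast k =>
      rw [Fin.snoc_castSucc]
      obtain ⟨j, hjk, hj⟩ := P.tgtOld k hi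
      exact ⟨Fin.castSucc j, (Fin.castSucc_lt_castSucc_iff).mpr hjk, by
        rw [Fin.snoc_castSucc]; exact hj⟩
  · -- internalNew
    intro i hi
    induction i using Fin.lastCases with
    | last =>
      rw [Fin.snoc_last]
      intro v hv hvs hvt j hj
      induction j using Fin.lastCases with
      | last => exact absurd hj (lt_irrefl _)
      | cast m =>
        rw [Fin.snoc_castSucc]
        intro hmem
        exact hint v hv hvs hvt ⟨m, hmem⟩
    | cast k =>
      rw [Fin.snoc_castSucc]
      intro v hv hvs hvt j hj
      induction j using Fin.lastCases with
      | last => exact absurd (lt_trans hj (Fin.castSucc_lt_last k)) (lt_irrefl _)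
      | cast m =>
        rw [Fin.snoc_castSucc]
        exact P.internalNew k hi v hv hvs hvt m ((Fin.castSucc_lt_castSucc_iff).mp hj)
  · -- covered equality
    show {e | ∃ i : Fin (P.f + 1), e ∈ ((Fin.snoc P.ears E : Fin (P.f+1) → EarOf G) i).2.2.edges}
      = P.covered ∪ {e | e ∈ E.2.2.edges}
    ext e
    constructor
    · rintro ⟨i, hi⟩
      induction i using Fin.lastCases with
      | last => rw [Fin.snoc_last] at hi; exact Or.inr hi
      | cast j => rw [Fin.snoc_castSucc] at hi; exact Or.inl ⟨j, hi⟩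
    · rintro (⟨j, hj⟩ | hE)
      · exact ⟨Fin.castSucc j, by rw [Fin.snoc_castSucc]; exact hj⟩
      · exact ⟨Fin.last P.f, by rw [Fin.snoc_last]; exact hE⟩

end EarAux

namespace EarAux
variable {V : Type} {G : SimpleGraph V}

lemma crossStep [DecidableEq V] (h2 : TwoConnected G) (P : PED G) {x y : V} (hadj : G.Adj x y)
    (hx : x ∈ P.S) (hy : y ∉ P.S) : ∃ P' : PED G, P.covered ⊂ P'.covered := by
  obtain ⟨s, hsS, hsx⟩ := P.exists_S_ne x
  have hyx : y ≠ x := hadj.ne'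
  have hconn := h2.2.2 x
  have hreach := hconn.preconnected ⟨y, hyx⟩ ⟨s, hsx⟩
  refine hreach.elim fun w0 => ?_
  let w1 : G.Walk y s := w0.map (outHom {u | u ≠ x})
  have hw1x : ∀ v ∈ w1.support, v ≠ x := by
    intro v hv
    replace hv : v ∈ (w0.map (outHom {u | u ≠ x})).support := hv
    rw [Walk.support_map, List.mem_map] at hv
    obtain ⟨u, _, rfl⟩ := hv
    exact u.2
  obtain ⟨z, hzS, q, hqsub, hqns⟩ := exists_prefix_to_set w1 hsS
  have hqx : ∀ v ∈ q.support, v ≠ x := fun v hv => hw1x v (hqsub v hv)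
  have hq'path := q.bypass_isPath
  have hq'sub : ∀ v ∈ q.bypass.support, v ∈ q.support :=
    fun v hv => q.support_bypass_subset hv
  have hxq' : x ∉ q.bypass.support := fun h => (hqx x (hq'sub x h)) rfl
  have hq'ns : ∀ v ∈ q.bypass.support, v ≠ z → v ∉ P.S :=
    fun v hv => hqns v (hq'sub v hv)
  have hzx : z ≠ x := hqx z q.end_mem_support
  set E : EarOf G := ⟨x, z, Walk.cons hadj q.bypass⟩ with hE
  have hEpath : E.2.2.IsPath := (Walk.cons_isPath_iff _ _).mpr ⟨hq'path, hxq'⟩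
  have hEnew : ∀ e ∈ E.2.2.edges, e ∉ P.covered := by
    intro e he hcov
    rw [Walk.edges_cons, List.mem_cons] at he
    rcases he with rfl | he
    · exact hy (P.mem_S_of_mem_covered _ hcov y (Sym2.mem_mk_right x y))
    · obtain ⟨u, hu, huS⟩ := edges_endpoint_not_mem q.bypass hq'path hq'ns e he
      exact huS (P.mem_S_of_mem_covered _ hcov u hu)
  obtain ⟨P', hP'⟩ := P.extend E hEpath (by simp [hE, E]) hzx.symm hx hzS
    (by
      intro v hv hvs hvt
      rw [Walk.support_cons, List.mem_cons] at hv
      rcases hv with rfl | hv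
      · exact absurd rfl hvs
      · exact hq'ns v hv hvt)
    hEnew
  refine ⟨P', ?_⟩
  rw [Set.ssubset_def, hP']
  refine ⟨Set.subset_union_left, fun hsub => ?_⟩
  have : s(x, y) ∈ P.covered := hsub (Or.inr (by simp [hE, E, Walk.edges_cons]))
  exact hEnew s(x, y) (by simp [hE, E, Walk.edges_cons]) this

lemma PED.step [DecidableEq V] (h2 : TwoConnected G) (P : PED G) {e : Sym2 V}
    (he : e ∈ G.edgeSet) (hun : e ∉ P.covered) : ∃ P' : PED G, P.covered ⊂ P'.covered := by
  revert he hun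
  induction e using Sym2.ind with
  | _ x y =>
    intro he hun
    have hadj : G.Adj x y := he
    by_cases hx : x ∈ P.S <;> by_cases hy : y ∈ P.S
    · -- single-edge ear
      set E : EarOf G := ⟨x, y, Walk.cons hadj Walk.nil⟩ with hE
      have hEnew : ∀ e' ∈ E.2.2.edges, e' ∉ P.covered := by
        intro e' he'
        simp only [hE, E, Walk.edges_cons, Walk.edges_nil, List.mem_cons, List.not_mem_nil,
          or_false] at he'
        subst he'
        exact hun
      obtain ⟨P', hP'⟩ := P.extend E
        (by simp [hE, E, Walk.cons_isPath_iff, hadj.ne])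
        (by simp [hE, E]) hadj.ne hx hy
        (by
          intro v hv hvs hvt
          simp only [hE, E, Walk.support_cons, Walk.support_nil, List.mem_cons,
            List.mem_singleton] at hv
          rcases hv with rfl | rfl | h
          · exact absurd rfl hvs
          · exact absurd rfl hvt
          · exact absurd h List.not_mem_nil)
        hEnew
      refine ⟨P', ?_⟩
      rw [Set.ssubset_def, hP']
      refine ⟨Set.subset_union_left, fun hsub => ?_⟩
      exact hun (hsub (Or.inr (by simp [hE, E])))
    · exact crossStep h2 P hadj hx hy
    · exact crossStep h2 P hadj.symm hy hx
    · -- neither endpoint in S: find a crossing edge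
      obtain ⟨s, hsS⟩ := P.S_nonempty
      have hreach := h2.1.preconnected s x
      refine hreach.elim fun w => ?_
      obtain ⟨u, v, huv, huS, hvS⟩ := exists_crossing w hsS hx
      exact crossStep h2 P huv huS hvS

end EarAux

namespace EarAux
variable {V : Type} {G : SimpleGraph V}

lemma PED.complete [Fintype V] [DecidableEq V] (h2 : TwoConnected G) :
    ∀ n (P : PED G), (G.edgeSet \ P.covered).ncard ≤ n →
      ∃ P' : PED G, P'.covered = G.edgeSet := by
  intro n
  induction n with
  | zero =>
    intro P h
    refine ⟨P, Set.Subset.antisymm P.covered_subset ?_⟩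
    intro e he
    by_contra hc
    have hne : (G.edgeSet \ P.covered).Nonempty := ⟨e, he, hc⟩
    have := Set.ncard_pos (Set.toFinite _) |>.mpr hne
    omega
  | succ n ih =>
    intro P h
    by_cases hall : G.edgeSet ⊆ P.covered
    · exact ⟨P, Set.Subset.antisymm P.covered_subset hall⟩
    · obtain ⟨e, he, hun⟩ := Set.not_subset.mp hall
      obtain ⟨P', hP'⟩ := PED.step h2 P he hun
      refine ih P' ?_
      have h1 : G.edgeSet \ P'.covered ⊂ G.edgeSet \ P.covered := by
        obtain ⟨e0, he0', he0⟩ := Set.exists_of_ssubset hP'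
        rw [Set.ssubset_def]
        refine ⟨Set.diff_subset_diff_right hP'.1, fun hsub => ?_⟩
        have : e0 ∈ G.edgeSet \ P'.covered :=
          hsub ⟨P'.covered_subset he0', he0⟩
        exact this.2 he0'
      have := Set.ncard_lt_ncard h1 (Set.toFinite _)
      omega

end EarAux

namespace EarAux
variable {V : Type} {G : SimpleGraph V}

/-- the initial one-edge partial decomposition -/
lemma PED.init (he : G.edgeSet.Nonempty) : Nonempty (PED G) := by
  obtain ⟨e, he⟩ := he
  revert he
  induction e using Sym2.ind with
  | _ x y =>
    intro he
    have hadj : G.Adj x y := he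
    refine ⟨⟨1, Nat.one_pos, fun _ => ⟨x, y, Walk.cons hadj Walk.nil⟩, ?_, ?_, ?_, ?_, ?_, ?_, ?_, ?_⟩⟩
    · intro i; simp [Walk.cons_isPath_iff, hadj.ne]
    · intro i j hij; exact absurd (Subsingleton.elim i j) hij
    · simp
    all_goals (intro i hi; exfalso; have := i.isLt; omega)

end EarAux


/-- Every 2-connected graph with at least one edge admits an
ear decomposition. -/

theorem two_connected_has_ear_decomposition {V : Type} [Fintype V] [DecidableEq V]
    (G : SimpleGraph V) (h2 : TwoConnected G) (he : G.edgeSet.Nonempty) :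
    Nonempty (EarDecomposition G) := by
  obtain ⟨P0⟩ := EarAux.PED.init he
  obtain ⟨P, hcov⟩ := EarAux.PED.complete h2 (G.edgeSet \ P0.covered).ncard P0 le_rfl
  refine ⟨⟨P.f, P.hf, fun i => (P.ears i).1, fun i => (P.ears i).2.1,
    fun i => (P.ears i).2.2, P.isPath, ?_, ?_, P.firstSingle, P.earNonempty,
    P.distinctEnds, P.srcOld, P.tgtOld, P.internalNew⟩⟩
  · -- vertexCover
    intro v
    have hnt : Nontrivial V := by
      have := h2.2.1
      exact Finite.one_lt_card_iff_nontrivial.mp (by omega)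
    obtain ⟨u, hu⟩ := exists_ne v
    have hreach := h2.1.preconnected v u
    refine hreach.elim fun w => ?_
    cases w with
    | nil => exact absurd rfl hu.symm
    | @cons _ c _ h p =>
      have hec : s(v, c) ∈ P.covered := hcov.symm ▸ (G.mem_edgeSet.mpr h)
      obtain ⟨i, hi⟩ := hec
      exact ⟨i, SimpleGraph.Walk.fst_mem_support_of_mem_edges _ hi⟩
  · -- cover
    intro e heG
    have : e ∈ P.covered := hcov.symm ▸ heG
    obtain ⟨i, hi⟩ := this
    refine ⟨i, hi, fun j hj => ?_⟩
    by_contra hne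
    exact P.disj j i hne e hj hi
end

section
/- Every 2-connected outerplanar graph with at least 3 vertices has a vertex of degree exactly 2. -/
/-- `G` is outerplanar: it has a drawing with all vertices (in some
order) on a circle and all edges drawn as pairwise non-crossing chords.
Two chords `{a,b}` and `{c,d}` cross exactly when their endpoints
interleave, i.e. (after cutting the circle open into a linear order)
`a < c < b < d`. -/
def Outerplanar {V : Type} (G : SimpleGraph V) : Prop :=
  ∃ f : V ↪ ℕ, ∀ a b c d : V, G.Adj a b → G.Adj c d →
    ¬ (f a < f c ∧ f c < f b ∧ f b < f d)

open Finset SimpleGraph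

private lemma walk_first_step {W : Type} {H : SimpleGraph W} {u t : W}
    (p : H.Walk u t) (h : u ≠ t) : ∃ x, H.Adj u x := by
  cases p with
  | nil => exact absurd rfl h
  | cons h' _ => exact ⟨_, h'⟩

private lemma two_neighbors {V : Type} [Fintype V] [DecidableEq V]
    (G : SimpleGraph V) [DecidableRel G.Adj] (h2 : TwoConnected G)
    (h3 : 3 ≤ Fintype.card V) (v : V) :
    ∃ x y : V, x ≠ y ∧ G.Adj v x ∧ G.Adj v y := by
  obtain ⟨hconn, -, hcut⟩ := h2
  obtain ⟨t, ht⟩ := Fintype.exists_ne_of_one_lt_card (by omega) v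
  obtain ⟨x, hx⟩ := walk_first_step (hconn.preconnected v t).some (Ne.symm ht)
  have hvx : v ≠ x := G.ne_of_adj hx
  obtain ⟨t2, ht2v, ht2x⟩ : ∃ t2 : V, t2 ≠ v ∧ t2 ≠ x := by
    by_contra hcon
    push_neg at hcon
    have hsub : (Finset.univ : Finset V) ⊆ {v, x} := by
      intro z _
      rcases eq_or_ne z v with rfl | hzv
      · simp
      · simp [hcon z hzv]
    have h1 : Fintype.card V ≤ ({v, x} : Finset V).card := by
      simpa [Finset.card_univ] using Finset.card_le_card hsub
    have h2 : ({v, x} : Finset V).card ≤ 2 :=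
      (Finset.card_insert_le _ _).trans (by simp)
    omega
  have hv' : v ∈ {u : V | u ≠ x} := hvx
  have ht' : t2 ∈ {u : V | u ≠ x} := ht2x
  have hne : (⟨v, hv'⟩ : ↥{u : V | u ≠ x}) ≠ ⟨t2, ht'⟩ := by
    intro h; exact ht2v (congrArg Subtype.val h).symm
  obtain ⟨y, hy⟩ :=
    walk_first_step ((hcut x).preconnected ⟨v, hv'⟩ ⟨t2, ht'⟩).some hne
  have hadj : G.Adj v y.1 := hy
  exact ⟨x, y.1, fun h => y.2 h.symm, hx, hadj⟩


/-- Every 2-connected outerplanar graph with at least 3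
vertices has a vertex of degree exactly 2. -/
theorem outerplanar_two_connected_has_degree_two_vertex {V : Type}
    [Fintype V] [DecidableEq V] (G : SimpleGraph V) [DecidableRel G.Adj]
    (h2 : TwoConnected G) (h3 : 3 ≤ Fintype.card V) (hout : Outerplanar G) :
    ∃ v : V, G.degree v = 2 := by
  classical
  obtain ⟨f, hf⟩ := hout
  set I : V → V → Finset V :=
    fun p q => Finset.univ.filter (fun w => f p < f w ∧ f w < f q) with hIdef
  have memI : ∀ p q w : V, w ∈ I p q ↔ (f p < f w ∧ f w < f q) := by
    intro p q w; simp [hIdef]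
  by_cases hE : ∃ pq : V × V, G.Adj pq.1 pq.2 ∧ (I pq.1 pq.2).Nonempty
  · -- main case
    obtain ⟨ab, hmemS, hmin⟩ := Finset.exists_min_image
      (Finset.univ.filter (fun pq : V × V => G.Adj pq.1 pq.2 ∧ (I pq.1 pq.2).Nonempty))
      (fun pq => (I pq.1 pq.2).card)
      (by obtain ⟨pq, h1, h2⟩ := hE; exact ⟨pq, by simp [h1, h2]⟩)
    rw [Finset.mem_filter] at hmemS
    obtain ⟨-, hab, habne⟩ := hmemS
    obtain ⟨a, b⟩ := ab
    simp only at hab habne hmin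
    obtain ⟨c, hcmem, hcmin⟩ := Finset.exists_min_image (I a b) f habne
    rw [memI] at hcmem
    obtain ⟨hac, hcb⟩ := hcmem
    -- neighbors of c lie in [f a, f b]
    have hbnd : ∀ d : V, G.Adj c d → f a ≤ f d ∧ f d ≤ f b := by
      intro d hcd
      constructor
      · by_contra hlt
        push_neg at hlt
        exact hf d c a b hcd.symm hab ⟨hlt, hac, hcb⟩
      · by_contra hlt
        push_neg at hlt
        exact hf a b c d hab hcd ⟨hac, hcb, hlt⟩
    -- lower neighbors equal a
    have hlow : ∀ d : V, G.Adj c d → f d < f c → d = a := by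
      intro d hcd hdc
      have h1 := (hbnd d hcd).1
      rcases h1.lt_or_eq with hlt | heq
      · have : d ∈ I a b := (memI a b d).2 ⟨hlt, hdc.trans hcb⟩
        have := hcmin d this
        omega
      · exact f.injective heq.symm
    -- at most one upper neighbor
    have hhigh : ∀ y z : V, G.Adj c y → G.Adj c z → f c < f y → f c < f z → y = z := by
      have key : ∀ y z : V, G.Adj c y → G.Adj c z → f c < f y → f y < f z → False := by
        intro y z hcy hcz h1 h2
        have hzb : f z ≤ f b := (hbnd z hcz).2
        have hsub : I c z ⊆ (I a b).erase c := by
          intro w hw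
          rw [memI] at hw
          rw [Finset.mem_erase, memI]
          refine ⟨fun h => by rw [h] at hw; omega, by omega, by omega⟩
        have hccard : (I a b).card ≤ (I c z).card := by
          have : ((c, z) : V × V) ∈ Finset.univ.filter
              (fun pq : V × V => G.Adj pq.1 pq.2 ∧ (I pq.1 pq.2).Nonempty) := by
            refine Finset.mem_filter.2 ⟨Finset.mem_univ _, hcz, ⟨y, (memI c z y).2 ⟨h1, h2⟩⟩⟩
          exact hmin (c, z) this
        have hcmemab : c ∈ I a b := (memI a b c).2 ⟨hac, hcb⟩
        have := Finset.card_le_card hsub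
        have hcardlt : ((I a b).erase c).card < (I a b).card :=
          Finset.card_erase_lt_of_mem hcmemab
        omega
      intro y z hcy hcz h1 h2
      rcases lt_trichotomy (f y) (f z) with h | h | h
      · exact absurd (key y z hcy hcz h1 h) id
      · exact f.injective h
      · exact absurd (key z y hcz hcy h2 h) id
    -- main conclusion given one lower and one upper neighbor
    have main : ∀ x y : V, G.Adj c x → G.Adj c y → f x < f c → f c < f y →
        G.degree c = 2 := by
      intro x y hcx hcy hx hy
      have hxy : x ≠ y := fun h => by rw [h] at hx; omega
      have hset : G.neighborFinset c = {x, y} := by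
        ext d
        rw [SimpleGraph.mem_neighborFinset, Finset.mem_insert, Finset.mem_singleton]
        constructor
        · intro hcd
          have hdc : f d ≠ f c := fun h => G.ne_of_adj hcd.symm (f.injective h)
          rcases lt_or_gt_of_ne hdc with h | h
          · left; rw [hlow d hcd h, hlow x hcx hx]
          · right; exact hhigh d y hcd hcy h hy
        · rintro (rfl | rfl)
          · exact hcx
          · exact hcy
      rw [SimpleGraph.degree, hset, Finset.card_insert_of_notMem (by simpa using hxy),
        Finset.card_singleton]
    obtain ⟨x, y, hxy, hcx, hcy⟩ := two_neighbors G h2 h3 c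
    have hxc : f x ≠ f c := fun h => G.ne_of_adj hcx.symm (f.injective h)
    have hyc : f y ≠ f c := fun h => G.ne_of_adj hcy.symm (f.injective h)
    rcases lt_or_gt_of_ne hxc with h1 | h1 <;> rcases lt_or_gt_of_ne hyc with h2 | h2
    · exact absurd ((hlow x hcx h1).trans (hlow y hcy h2).symm) hxy
    · exact ⟨c, main x y hcx hcy h1 h2⟩
    · exact ⟨c, main y x hcy hcx h2 h1⟩
    · exact absurd (hhigh x y hcx hcy h1 h2) hxy
  · -- base case: contradiction
    exfalso
    push_neg at hE
    have hemp : ∀ p q : V, G.Adj p q → ∀ w : V, ¬ (f p < f w ∧ f w < f q) := by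
      intro p q hpq w hw
      have := hE (p, q) hpq
      have : w ∈ I p q := (memI p q w).2 hw
      simp_all
      exact absurd (this hw.1) (not_le.mpr hw.2)
    have hne : (Finset.univ : Finset V).Nonempty := by
      rw [Finset.univ_nonempty_iff]
      have : 0 < Fintype.card V := by omega
      exact Fintype.card_pos_iff.mp this
    obtain ⟨m, -, hm⟩ := Finset.exists_min_image Finset.univ f hne
    have herase : (Finset.univ.erase m).Nonempty := by
      rw [← Finset.card_pos, Finset.card_erase_of_mem (Finset.mem_univ m), Finset.card_univ]
      omega
    obtain ⟨w, hwmem, hw⟩ := Finset.exists_min_image (Finset.univ.erase m) f herase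
    have hwm : w ≠ m := Finset.ne_of_mem_erase hwmem
    have hmw : f m < f w := by
      have := hm w (Finset.mem_univ w)
      rcases this.lt_or_eq with h | h
      · exact h
      · exact absurd (f.injective h) (Ne.symm hwm)
    obtain ⟨t, htmem⟩ : ∃ t : V, t ∈ Finset.univ \ {m, w} := by
      rw [← Finset.card_pos] at *
      have h1 : ({m, w} : Finset V).card ≤ 2 :=
        (Finset.card_insert_le _ _).trans (by simp)
      have := Finset.le_card_sdiff ({m, w} : Finset V) (Finset.univ : Finset V)
      have h2 : 1 ≤ (Finset.univ \ ({m, w} : Finset V)).card := by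
        have h3 := Finset.card_sdiff_of_subset (Finset.subset_univ ({m, w} : Finset V))
        rw [Finset.card_univ] at h3
        omega
      exact Finset.card_pos.mp (by omega)
    rw [Finset.mem_sdiff, Finset.mem_insert, Finset.mem_singleton] at htmem
    push_neg at htmem
    obtain ⟨-, htm, htw⟩ := htmem
    have hwt : f w < f t := by
      have h1 := hw t (Finset.mem_erase.2 ⟨htm, Finset.mem_univ t⟩)
      rcases h1.lt_or_eq with h | h
      · exact h
      · exact absurd (f.injective h) (Ne.symm htw)
    -- connectivity of G minus w
    have hmw' : m ∈ {u : V | u ≠ w} := Ne.symm hwm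
    have htw' : t ∈ {u : V | u ≠ w} := htw
    have key : ∀ (p q : ↥{u : V | u ≠ w}) (_ : (G.induce {u : V | u ≠ w}).Walk p q),
        f p.1 < f w → f q.1 < f w := by
      intro p q walk
      induction walk with
      | nil => exact id
      | cons h' p' ih =>
        intro hp
        apply ih
        rename_i u' v' w' 
        have hadj : G.Adj u'.1 v'.1 := h'
        have hvw : v'.1 ≠ w := v'.2
        by_contra hge
        push_neg at hge
        have : f w < f v'.1 := by
          rcases hge.lt_or_eq with h | h
          · exact h
          · exact absurd (f.injective h.symm) hvw
        exact hemp u'.1 v'.1 hadj w ⟨hp, this⟩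
    have hreach := ((h2.2.2 w).preconnected ⟨m, hmw'⟩ ⟨t, htw'⟩).some
    have := key _ _ hreach hmw
    simp only at this
    omega
end

section
/- Let G be a plane triangulated multigraph without loops, and let M be a set of edges of G whose dual edges form a perfect matching of the dual graph G*. Then the subgraph H = (V(G), E(G) \ M) is bipartite, and for every angle ∠uvw of G (two edges (u,v), (v,w) consecutive in the rotation at v, bounding a common face), at least one of the edges (u,v), (v,w) belongs to H. -/
/-- A combinatorial map (rotation system): a finite set of darts `D`, a
fixed-point-free involution `α` pairing the darts into edges, and a
permutation `σ` whose orbits are the counterclockwise rotations of darts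
around the vertices.  Vertices are the orbits of `σ`, edges the orbits of
`α`, and faces the orbits of `φ = σ ∘ α`. -/
structure CombMap where
  D : Type
  [fintypeD : Fintype D]
  [decD : DecidableEq D]
  σ : Equiv.Perm D
  α : Equiv.Perm D
  α_invol : ∀ d, α (α d) = d
  α_fpf : ∀ d, α d ≠ d

attribute [instance] CombMap.fintypeD CombMap.decD

namespace CombMap

variable (M : CombMap)

/-- The face permutation `φ = σ ∘ α`. -/
def φ : Equiv.Perm M.D := M.α.trans M.σ

/-- Two darts emanate from the same vertex. -/
def SameVertex : M.D → M.D → Prop := M.σ.SameCycle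

/-- Two darts belong to the same edge. -/
def SameEdge : M.D → M.D → Prop := M.α.SameCycle

/-- Two darts lie on the boundary walk of the same face. -/
def SameFace : M.D → M.D → Prop := M.φ.SameCycle

def orbitSetoid (f : Equiv.Perm M.D) : Setoid M.D :=
  ⟨f.SameCycle, ⟨fun x => Equiv.Perm.SameCycle.refl f x,
    fun h => h.symm, fun h h' => h.trans h'⟩⟩

/-- One step between darts (to the next dart at the vertex, or to the
other dart of the edge). -/
def Step (a b : M.D) : Prop := b = M.σ a ∨ b = M.α a

/-- The two darts lie in the same connected component. -/
def Reach : M.D → M.D → Prop := Relation.EqvGen M.Step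

/-- The map is connected. -/
def Connected : Prop := ∀ a b : M.D, M.Reach a b

def reachSetoid : Setoid M.D := ⟨M.Reach, Relation.EqvGen.is_equivalence _⟩

/-- Number of vertices. -/
noncomputable def nV : ℕ := Nat.card (Quotient (M.orbitSetoid M.σ))
/-- Number of edges. -/
noncomputable def nE : ℕ := Nat.card (Quotient (M.orbitSetoid M.α))
/-- Number of faces. -/
noncomputable def nF : ℕ := Nat.card (Quotient (M.orbitSetoid M.φ))
/-- Number of connected components. -/
noncomputable def nC : ℕ := Nat.card (Quotient M.reachSetoid)

/-- Genus zero, via Euler's formula (componentwise): the combinatorial map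
corresponds to a crossing-free drawing in the plane/sphere. -/
def Planar : Prop := (M.nV : ℤ) - (M.nE : ℤ) + (M.nF : ℤ) = 2 * (M.nC : ℤ)

/-- The dart `d` lies on a loop. -/
def IsLoopDart (d : M.D) : Prop := M.SameVertex d (M.α d)

def Loopless : Prop := ∀ d, ¬ M.IsLoopDart d

/-- Every face is a triangle (boundary walk of length 3). -/
def Triangulated : Prop := ∀ d, M.φ (M.φ (M.φ d)) = d ∧ M.φ d ≠ d

/-- There is a bigon, i.e. a face of degree 2. -/
def HasBigon : Prop := ∃ d, M.φ (M.φ d) = d ∧ M.φ d ≠ d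

/-- Darts surviving after deleting the vertex of `d₀` (and its incident
edges). -/
def AvoidsVertex (d₀ d : M.D) : Prop :=
  ¬ M.SameVertex d₀ d ∧ ¬ M.SameVertex d₀ (M.α d)

def StepIn (P : M.D → Prop) (a b : M.D) : Prop := P a ∧ P b ∧ M.Step a b

/-- The vertex of `d₀` is a cutvertex: deleting it disconnects the map. -/
def IsCutVertexDart (d₀ : M.D) : Prop :=
  ∃ a b, M.AvoidsVertex d₀ a ∧ M.AvoidsVertex d₀ b ∧
    ¬ Relation.EqvGen (M.StepIn (M.AvoidsVertex d₀)) a b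

/-- 2-connected: connected, at least two vertices, no loops (a vertex with
a loop counts as a cutvertex) and no cutvertex. -/
def TwoConnected : Prop :=
  M.Connected ∧ (∃ d d', ¬ M.SameVertex d d') ∧ M.Loopless ∧
    ∀ d₀, ¬ M.IsCutVertexDart d₀

end CombMap

/-- `ι` exhibits `M` as the spanning sub-plane-graph of `M'` obtained by
deleting the edges outside the range of `ι`: the pairing of darts into
edges is preserved, the rotation of `M` at each vertex is the one induced
by the rotation of `M'` (first return to the range of `ι`), and `M'` has
no vertices besides those of `M`.  Equivalently (both maps being plane),
`M'` arises from `M` by adding edges inside faces. -/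
structure CombMap.IsEdgeSubmap (M M' : CombMap) (ι : M.D ↪ M'.D) : Prop where
  alpha_comm : ∀ d, ι (M.α d) = M'.α (ι d)
  rotation : ∀ d : M.D, ∃ k : ℕ, 0 < k ∧ ι (M.σ d) = (M'.σ ^ k) (ι d) ∧
    ∀ j : ℕ, 0 < j → j < k → (M'.σ ^ j) (ι d) ∉ Set.range ι
  spanning : ∀ a : M'.D, ∃ d, M'.SameVertex a (ι d)

/-- The vertex of the dart `x` of `M'` is happy with respect to the set
`R` of original darts: some angle at this vertex (pair of darts
consecutive in the rotation) consists of two original darts. -/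
def CombMap.HappyAt (M' : CombMap) (R : Set M'.D) (x : M'.D) : Prop :=
  ∃ a, M'.SameVertex x a ∧ a ∈ R ∧ M'.σ a ∈ R

open Module Finset

namespace DMProof
open scoped Classical

variable {D : Type}

/-- functions constant along a permutation -/
def Fix (f : Equiv.Perm D) : Submodule (ZMod 2) (D → ZMod 2) where
  carrier := {x | ∀ d, x (f d) = x d}
  add_mem' := fun {x y} hx hy d => by simp [Pi.add_apply, hx d, hy d]
  zero_mem' := fun d => rfl
  smul_mem' := fun c x hx d => by simp [Pi.smul_apply, hx d]

lemma fix_zpow {f : Equiv.Perm D} {x : D → ZMod 2} (hx : ∀ d, x (f d) = x d) :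
    ∀ (k : ℤ) (d : D), x ((f ^ k) d) = x d := by
  intro k
  induction k using Int.induction_on with
  | zero => intro d; simp
  | succ k ih =>
      intro d
      have : (f ^ ((k : ℤ) + 1)) d = (f ^ (k : ℤ)) (f d) := by
        rw [zpow_add_one, Equiv.Perm.mul_apply]
      rw [this, ih (f d), hx d]
  | pred k ih =>
      intro d
      have : (f ^ (-(k : ℤ) - 1)) d = (f ^ (-(k : ℤ))) (f⁻¹ d) := by
        rw [sub_eq_add_neg, zpow_add, Equiv.Perm.mul_apply, zpow_neg_one]
      rw [this, ih (f⁻¹ d), ← hx (f⁻¹ d)]; simp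

lemma fix_sameCycle {f : Equiv.Perm D} {x : D → ZMod 2} (hx : ∀ d, x (f d) = x d)
    {a b : D} (h : f.SameCycle a b) : x a = x b := by
  obtain ⟨k, hk⟩ := h
  rw [← hk, fix_zpow hx]


section FixEquiv
variable {D : Type} [Fintype D] [DecidableEq D]

noncomputable def fixEquiv (f : Equiv.Perm D) (s : Setoid D)
    (hs : ∀ a b, s.r a b ↔ f.SameCycle a b) :
    Fix f ≃ₗ[ZMod 2] (Quotient s → ZMod 2) where
  toFun x := Quotient.lift (fun d => x.1 d)
    (fun a b hab => fix_sameCycle x.2 ((hs a b).mp hab))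
  invFun t := ⟨fun d => t (Quotient.mk s d), fun d => by
    refine congrArg t (Quotient.sound ?_)
    exact (hs _ _).mpr ⟨-1, by simp⟩⟩
  map_add' x y := funext fun q => Quotient.inductionOn q (fun d => rfl)
  map_smul' c x := funext fun q => Quotient.inductionOn q (fun d => rfl)
  left_inv x := Subtype.ext (funext fun d => rfl)
  right_inv t := funext fun q => Quotient.inductionOn q (fun d => rfl)

set_option linter.unusedSectionVars false in
lemma finrank_fix (f : Equiv.Perm D) (s : Setoid D)
    (hs : ∀ a b, s.r a b ↔ f.SameCycle a b) :
    finrank (ZMod 2) (Fix f) = Nat.card (Quotient s) := by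
  haveI : Fintype (Quotient s) := Fintype.ofFinite _
  rw [(fixEquiv f s hs).finrank_eq, finrank_pi, Nat.card_eq_fintype_card]

end FixEquiv

lemma z2 (a : ZMod 2) : a + a = 0 := by
  have h2 : (2 : ZMod 2) = 0 := rfl
  calc a + a = 2 * a := (two_mul a).symm
    _ = 0 := by rw [h2, zero_mul]

lemma fn2 {D : Type} (x : D → ZMod 2) : x + x = 0 := funext fun d => z2 (x d)

section Main
open CombMap
variable (M : CombMap)

/-- darts at the same vertex as `e` -/
noncomputable def vset (e : M.D) : Finset M.D := univ.filter (fun d => M.σ.SameCycle e d)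

/-- boundary map -/
noncomputable def bd : (M.D → ZMod 2) →ₗ[ZMod 2] (M.D → ZMod 2) where
  toFun x := fun e => ∑ d ∈ vset M e, x d
  map_add' x y := funext fun e => by simp [Finset.sum_add_distrib]
  map_smul' c x := funext fun e => by simp [Finset.mul_sum]

/-- vertex indicator -/
noncomputable def Vv (a : M.D) : M.D → ZMod 2 := fun e => if M.σ.SameCycle a e then 1 else 0

/-- edge indicator -/
noncomputable def pr (a : M.D) : M.D → ZMod 2 :=
  fun e => (if e = a then 1 else 0) + (if e = M.α a then 1 else 0)

lemma sc_step {D : Type} (f : Equiv.Perm D) (d : D) : f.SameCycle d (f d) := ⟨1, by simp⟩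

lemma Vv_mem_fix (a : M.D) : Vv M a ∈ Fix M.σ := by
  intro d
  simp only [Vv]
  refine if_congr ?_ rfl rfl
  exact ⟨fun h => h.trans (sc_step M.σ d).symm, fun h => h.trans (sc_step M.σ d)⟩

lemma Vv_sigma (a : M.D) : Vv M (M.σ a) = Vv M a := by
  funext e
  simp only [Vv]
  refine if_congr ?_ rfl rfl
  have h1 : M.σ.SameCycle a (M.σ a) := sc_step M.σ a
  exact ⟨fun h => h1.trans h, fun h => h1.symm.trans h⟩

lemma pr_mem_fix (a : M.D) : pr M a ∈ Fix M.α := by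
  intro d
  have h1 : (M.α d = a) ↔ (d = M.α a) :=
    ⟨fun h => by rw [← h, M.α_invol], fun h => by rw [h, M.α_invol]⟩
  have h2 : (M.α d = M.α a) ↔ (d = a) := Equiv.apply_eq_iff_eq M.α
  show (if M.α d = a then (1:ZMod 2) else 0) + (if M.α d = M.α a then 1 else 0) = _
  rw [if_congr h1 rfl rfl, if_congr h2 rfl rfl, add_comm]
  rfl

lemma bd_pr (a : M.D) : bd M (pr M a) = Vv M a + Vv M (M.α a) := by
  funext e
  show ∑ d ∈ vset M e, pr M a d = _
  simp only [pr, Finset.sum_add_distrib, Finset.sum_ite_eq' (vset M e)]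
  have hm : ∀ b : M.D, (b ∈ vset M e) = M.σ.SameCycle b e := by
    intro b
    simp only [vset, Finset.mem_filter, Finset.mem_univ, true_and]
    exact propext Equiv.Perm.sameCycle_comm
  simp only [Pi.add_apply, Vv, hm]


/-- face quotient -/
noncomputable abbrev QF := Quotient (M.orbitSetoid M.φ)

noncomputable def mkF (d : M.D) : QF M := Quotient.mk (M.orbitSetoid M.φ) d

lemma mkF_phi (d : M.D) : mkF M (M.φ d) = mkF M d :=
  Quot.sound (by exact (sc_step M.φ d).symm)

lemma mkF_alpha (d : M.D) : mkF M (M.α d) = mkF M (M.σ d) := by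
  refine Quot.sound (?_ : M.φ.SameCycle (M.α d) (M.σ d))
  have : M.φ (M.α d) = M.σ d := by
    show M.σ (M.α (M.α d)) = M.σ d
    rw [M.α_invol]
  exact this ▸ sc_step M.φ (M.α d)

/-- face-chain map -/
noncomputable def wF : (QF M → ZMod 2) →ₗ[ZMod 2] (M.D → ZMod 2) where
  toFun t := fun d => t (mkF M d) + t (mkF M (M.α d))
  map_add' x y := funext fun d => by simp [Pi.add_apply]; ring
  map_smul' c x := funext fun d => by simp [Pi.smul_apply]; ring

lemma wF_mem_fix (t : QF M → ZMod 2) : wF M t ∈ Fix M.α := by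
  intro d
  show t (mkF M (M.α d)) + t (mkF M (M.α (M.α d))) = t (mkF M d) + t (mkF M (M.α d))
  rw [M.α_invol, add_comm]

lemma sum_vset_reindex (e : M.D) (g : M.D → ZMod 2) :
    ∑ d ∈ vset M e, g (M.σ d) = ∑ d ∈ vset M e, g d := by
  refine Finset.sum_nbij' (fun a => M.σ a) (fun a => M.σ⁻¹ a) ?_ ?_ ?_ ?_ ?_
  · intro a ha
    simp only [vset, Finset.mem_filter, Finset.mem_univ, true_and] at ha ⊢
    exact ha.trans (sc_step M.σ a)
  · intro a ha
    simp only [vset, Finset.mem_filter, Finset.mem_univ, true_and] at ha ⊢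
    refine ha.trans ?_
    have := (sc_step M.σ (M.σ⁻¹ a)).symm
    simpa using this
  · intro a _; simp
  · intro a _; simp
  · intro a _; rfl

lemma bd_wF (t : QF M → ZMod 2) : bd M (wF M t) = 0 := by
  funext e
  show ∑ d ∈ vset M e, (t (mkF M d) + t (mkF M (M.α d))) = 0
  rw [Finset.sum_add_distrib]
  have h1 : ∑ d ∈ vset M e, t (mkF M (M.α d)) = ∑ d ∈ vset M e, t (mkF M d) := by
    have h2 : ∀ d, t (mkF M (M.α d)) = t (mkF M (M.σ d)) := fun d => by rw [mkF_alpha]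
    simp only [h2]
    exact sum_vset_reindex M e (fun d => t (mkF M d))
  rw [h1]
  rw [← Finset.sum_add_distrib]
  refine Finset.sum_eq_zero fun d _ => z2 _


lemma alpha_sameCycle {a b : M.D} (h : M.α.SameCycle a b) : b = a ∨ b = M.α a := by
  obtain ⟨k, hk⟩ := h
  rw [← hk]; clear hk
  induction k using Int.induction_on with
  | zero => left; simp
  | succ k ih =>
      have hs : (M.α ^ ((k:ℤ) + 1)) a = M.α ((M.α ^ (k:ℤ)) a) := by
        rw [add_comm, zpow_one_add, Equiv.Perm.mul_apply]
      rcases ih with h | h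
      · right; rw [hs, h]
      · left; rw [hs, h, M.α_invol]
  | pred k ih =>
      have hs : (M.α ^ (-(k:ℤ) - 1)) a = M.α⁻¹ ((M.α ^ (-(k:ℤ))) a) := by
        rw [show -(k:ℤ) - 1 = -1 + -(k:ℤ) by ring, zpow_add, zpow_neg_one,
          Equiv.Perm.mul_apply]
      have hinv : ∀ x : M.D, M.α⁻¹ x = M.α x := by
        intro x
        have : M.α (M.α x) = x := M.α_invol x
        calc M.α⁻¹ x = M.α⁻¹ (M.α (M.α x)) := by rw [this]
          _ = M.α x := M.α.symm_apply_apply _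
      rcases ih with h | h
      · right; rw [hs, h, hinv]
      · left; rw [hs, h, hinv, M.α_invol]

/-- canonical representative of the edge of a dart -/
noncomputable def repE (d : M.D) : M.D := (Quotient.mk (M.orbitSetoid M.α) d).out

lemma repE_sameCycle (d : M.D) : M.α.SameCycle (repE M d) d := by
  have h := Quotient.mk_out (s := M.orbitSetoid M.α) d
  exact (Quotient.exact (Quotient.sound h) : M.α.SameCycle _ _)

lemma repE_or (d : M.D) : repE M d = d ∨ repE M d = M.α d := by
  rcases alpha_sameCycle M (repE_sameCycle M d) with h | h
  · exact Or.inl h.symm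
  · right; rw [← M.α_invol (repE M d), ← h]

lemma repE_alpha (d : M.D) : repE M (M.α d) = repE M d := by
  unfold repE
  congr 1
  exact Quotient.sound (by exact (sc_step M.α d).symm)

lemma repE_alpha_iff (d : M.D) : repE M d = d ↔ ¬ (repE M (M.α d) = M.α d) := by
  constructor
  · intro h hc
    have : M.α d = d := by rw [← hc, repE_alpha, h]
    exact M.α_fpf d this
  · intro hc
    rcases repE_or M (M.α d) with h | h
    · exact absurd h hc
    · rw [repE_alpha, M.α_invol] at h
      exact h

variable (S : Set M.D)

/-- support of the non-S edge sum -/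
noncomputable def musupp : Finset M.D := univ.filter (fun d => repE M d = d ∧ d ∉ S)

noncomputable def nsupp : Finset M.D := univ.filter (fun d : M.D => d ∉ S)

/-- sum over non-S edges -/
noncomputable def mu : (M.D → ZMod 2) →ₗ[ZMod 2] ZMod 2 where
  toFun x := ∑ d ∈ musupp M S, x d
  map_add' x y := by simp [Finset.sum_add_distrib]
  map_smul' c x := by simp [Finset.mul_sum]

lemma pair_sum (g : M.D → ZMod 2) (hS : ∀ d, d ∈ S ↔ M.α d ∈ S) :
    ∑ d ∈ musupp M S, (g d + g (M.α d)) = ∑ d ∈ nsupp M S, g d := by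
  classical
  have hP : ∀ d : M.D, d ∉ S ↔ M.α d ∉ S := fun d => not_iff_not.mpr (hS d)
  have hA : musupp M S = (nsupp M S).filter (fun d => repE M d = d) := by
    unfold musupp nsupp
    ext d
    simp only [Finset.mem_filter, Finset.mem_univ, true_and]
    exact and_comm
  have hsplit := Finset.sum_filter_add_sum_filter_not
    (nsupp M S) (fun d => repE M d = d) g
  have hre : ∑ d ∈ (nsupp M S).filter (fun d => ¬ repE M d = d), g d =
      ∑ d ∈ (nsupp M S).filter (fun d => repE M d = d), g (M.α d) := by
    refine Finset.sum_nbij' (fun a => M.α a) (fun a => M.α a) ?_ ?_ ?_ ?_ ?_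
    · intro a ha
      simp only [nsupp, Finset.mem_filter, Finset.mem_univ, true_and] at ha ⊢
      refine ⟨(hP a).mp ha.1, ?_⟩
      rcases repE_or M (M.α a) with h | h
      · exact h
      · exfalso
        rw [repE_alpha, M.α_invol] at h
        exact ha.2 h
    · intro a ha
      simp only [nsupp, Finset.mem_filter, Finset.mem_univ, true_and] at ha ⊢
      exact ⟨(hP a).mp ha.1, (repE_alpha_iff M a).mp ha.2⟩
    · intro a _; exact M.α_invol a
    · intro a _; exact M.α_invol a
    · intro a _
      show g a = g (M.α (M.α a))
      rw [M.α_invol]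
  rw [hA, Finset.sum_add_distrib, ← hre]
  convert hsplit using 2
  all_goals
    refine Finset.sum_congr (Finset.filter_congr_decidable ..) (fun d _ => rfl)

lemma mu_pr (a : M.D) (ha : a ∉ S) (hS : ∀ d, d ∈ S ↔ M.α d ∈ S) : mu M S (pr M a) = 1 := by
  have hpr : ∀ d : M.D, pr M a d =
      (if d = a then (1:ZMod 2) else 0) + (if M.α d = a then 1 else 0) := by
    intro d
    unfold pr
    congr 1
    refine if_congr ?_ rfl rfl
    exact ⟨fun h => by rw [h, M.α_invol], fun h => by rw [← h, M.α_invol]⟩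
  show ∑ d ∈ musupp M S, pr M a d = 1
  calc ∑ d ∈ musupp M S, pr M a d
      = ∑ d ∈ musupp M S,
          ((if d = a then (1:ZMod 2) else 0) + (if M.α d = a then 1 else 0)) :=
        Finset.sum_congr rfl fun d _ => hpr d
    _ = ∑ d ∈ nsupp M S, (if d = a then (1:ZMod 2) else 0) :=
        pair_sum M S (fun d => if d = a then (1:ZMod 2) else 0) hS
    _ = if a ∈ nsupp M S then 1 else 0 :=
        Finset.sum_ite_eq' (nsupp M S) a (fun _ => (1:ZMod 2))
    _ = 1 := by simp [nsupp, ha]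

lemma mu_wF (t : QF M → ZMod 2) (hS : ∀ d, d ∈ S ↔ M.α d ∈ S) :
    mu M S (wF M t) = ∑ d ∈ nsupp M S, t (mkF M d) := by
  calc mu M S (wF M t) = ∑ d ∈ musupp M S, (t (mkF M d) + t (mkF M (M.α d))) :=
        Finset.sum_congr rfl fun d _ => rfl
    _ = ∑ d ∈ nsupp M S, t (mkF M d) :=
        pair_sum M S (fun d => t (mkF M d)) hS

lemma phi_sameCycle (htri : M.Triangulated) {a b : M.D} (h : M.φ.SameCycle a b) :
    b = a ∨ b = M.φ a ∨ b = M.φ (M.φ a) := by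
  obtain ⟨k, hk⟩ := h
  rw [← hk]; clear hk
  induction k using Int.induction_on with
  | zero => left; simp
  | succ k ih =>
      have hs : (M.φ ^ ((k:ℤ) + 1)) a = M.φ ((M.φ ^ (k:ℤ)) a) := by
        rw [add_comm, zpow_one_add, Equiv.Perm.mul_apply]
      rcases ih with h | h | h
      · right; left; rw [hs, h]
      · right; right; rw [hs, h]
      · left; rw [hs, h, (htri a).1]
  | pred k ih =>
      have hs : (M.φ ^ (-(k:ℤ) - 1)) a = M.φ⁻¹ ((M.φ ^ (-(k:ℤ))) a) := by
        rw [show -(k:ℤ) - 1 = -1 + -(k:ℤ) by ring, zpow_add, zpow_neg_one,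
          Equiv.Perm.mul_apply]
      have hinv : ∀ x : M.D, M.φ⁻¹ x = M.φ (M.φ x) := by
        intro x
        have h3 : M.φ (M.φ (M.φ x)) = x := (htri x).1
        calc M.φ⁻¹ x = M.φ⁻¹ (M.φ (M.φ (M.φ x))) := by rw [h3]
          _ = M.φ (M.φ x) := M.φ.symm_apply_apply _
      rcases ih with h | h | h
      · right; right; rw [hs, h, hinv]
      · left; rw [hs, h, hinv, (htri a).1]
      · right; left
        rw [hs, h, hinv]
        exact (htri (M.φ a)).1

lemma unique_S_face (hmatch : ∀ d : M.D, ∃! d' : M.D, d' ∈ S ∧ M.SameFace d d')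
    {a b : M.D} (ha : a ∈ S) (hb : b ∈ S) (hab : M.φ.SameCycle a b) : a = b := by
  obtain ⟨u, _, huniq⟩ := hmatch a
  have h1 : a = u := huniq a ⟨ha, Equiv.Perm.SameCycle.refl _ _⟩
  have h2 : b = u := huniq b ⟨hb, hab⟩
  rw [h1, h2]

lemma sum_nsupp_face_zero (htri : M.Triangulated)
    (hmatch : ∀ d : M.D, ∃! d' : M.D, d' ∈ S ∧ M.SameFace d d')
    (t : QF M → ZMod 2) :
    ∑ d ∈ nsupp M S, t (mkF M d) = 0 := by
  have hmem : ∀ d : M.D, d ∈ nsupp M S ↔ d ∉ S := by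
    intro d; simp [nsupp]
  -- the pairing of the two non-S darts of each face
  set j : M.D → M.D := fun d => if M.φ d ∈ S then M.φ (M.φ d) else M.φ d with hj
  have hSj : ∀ d, d ∉ S → j d ∉ S := by
    intro d hd
    by_cases h : M.φ d ∈ S
    · have : j d = M.φ (M.φ d) := by rw [hj]; simp [h]
      rw [this]
      intro hc
      have := unique_S_face M S hmatch h hc (sc_step M.φ (M.φ d))
      exact (htri d).2 (M.φ.injective this.symm)
    · have : j d = M.φ d := by rw [hj]; simp [h]
      rw [this]; exact h
  have hjj : ∀ d, d ∉ S → j (j d) = d := by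
    intro d hd
    by_cases h : M.φ d ∈ S
    · have h1 : j d = M.φ (M.φ d) := by rw [hj]; simp [h]
      have h2 : M.φ (j d) ∉ S := by rw [h1, (htri d).1]; exact hd
      rw [h1]
      show (if M.φ (M.φ (M.φ d)) ∈ S then _ else M.φ (M.φ (M.φ d))) = d
      rw [(htri d).1]
      simp [hd]
    · have h1 : j d = M.φ d := by rw [hj]; simp [h]
      have h2 : M.φ (M.φ d) ∈ S := by
        obtain ⟨u, ⟨hu1, hu2⟩, _⟩ := hmatch d
        rcases phi_sameCycle M htri hu2 with he | he | he
        · exact absurd (he ▸ hu1) hd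
        · exact absurd (he ▸ hu1) h
        · exact he ▸ hu1
      rw [h1]
      show (if M.φ (M.φ d) ∈ S then M.φ (M.φ (M.φ d)) else _) = d
      simp [h2, (htri d).1]
  refine Finset.sum_involution (fun d _ => j d) ?_ ?_ ?_ ?_
  · intro d hd
    have : mkF M (j d) = mkF M d := by
      by_cases h : M.φ d ∈ S
      · have h1 : j d = M.φ (M.φ d) := by rw [hj]; simp [h]
        rw [h1, mkF_phi, mkF_phi]
      · have h1 : j d = M.φ d := by rw [hj]; simp [h]
        rw [h1, mkF_phi]
    rw [this]
    exact z2 _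
  · intro d hd _
    intro hc
    replace hc : j d = d := hc
    by_cases h : M.φ d ∈ S
    · have h1 : j d = M.φ (M.φ d) := by rw [hj]; simp [h]
      rw [h1] at hc
      have := congrArg M.φ hc
      rw [(htri d).1] at this
      exact (htri d).2 this.symm
    · have h1 : j d = M.φ d := by rw [hj]; simp [h]
      rw [h1] at hc
      exact (htri d).2 hc
  · intro d hd
    exact (hmem _).mpr (hSj d ((hmem d).mp hd))
  · intro d hd
    exact hjj d ((hmem d).mp hd)

lemma mu_wF_zero (htri : M.Triangulated)
    (hmatch : ∀ d : M.D, ∃! d' : M.D, d' ∈ S ∧ M.SameFace d d')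
    (hS : ∀ d, d ∈ S ↔ M.α d ∈ S) (t : QF M → ZMod 2) :
    mu M S (wF M t) = 0 := by
  rw [mu_wF M S t hS, sum_nsupp_face_zero M S htri hmatch t]

/-- canonical representative of the vertex of a dart -/
noncomputable def repV (d : M.D) : M.D := (Quotient.mk (M.orbitSetoid M.σ) d).out

lemma repV_sameCycle (d : M.D) : M.σ.SameCycle (repV M d) d := by
  have h := Quotient.mk_out (s := M.orbitSetoid M.σ) d
  exact (Quotient.exact (Quotient.sound h) : M.σ.SameCycle _ _)

lemma repV_eq_of_sameCycle {a b : M.D} (h : M.σ.SameCycle a b) : repV M a = repV M b := by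
  unfold repV
  congr 1
  exact Quotient.sound (by exact h)

lemma repV_idem (d : M.D) : repV M (repV M d) = repV M d :=
  repV_eq_of_sameCycle M (repV_sameCycle M d)

lemma fix_sigma_le_span :
    Fix M.σ ≤ Submodule.span (ZMod 2) (Set.range (Vv M)) := by
  intro x hx
  have hxe : x = ∑ d ∈ univ.filter (fun d => repV M d = d), x d • Vv M d := by
    funext e
    have hsum : (∑ d ∈ univ.filter (fun d => repV M d = d), x d • Vv M d) e
        = x (repV M e) • Vv M (repV M e) e := by
      rw [Finset.sum_apply]
      refine Finset.sum_eq_single (repV M e) ?_ ?_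
      · intro d hd hne
        simp only [Finset.mem_filter, Finset.mem_univ, true_and] at hd
        have hnc : ¬ M.σ.SameCycle d e := by
          intro hc
          exact hne (hd ▸ repV_eq_of_sameCycle M hc)
        show x d • Vv M d e = 0
        simp [Vv, hnc]
      · intro hmem
        exfalso
        exact hmem (by simp [repV_idem M e])
    rw [hsum]
    have h1 : Vv M (repV M e) e = 1 := by simp [Vv, repV_sameCycle M e]
    rw [h1, smul_eq_mul, mul_one]
    exact fix_sameCycle hx (repV_sameCycle M e).symm
  rw [hxe]
  refine Submodule.sum_mem _ fun d _ => ?_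
  exact Submodule.smul_mem _ _ (Submodule.subset_span ⟨d, rfl⟩)

/-- restricted boundary map -/
noncomputable def bdr : (Fix M.α) →ₗ[ZMod 2] (M.D → ZMod 2) :=
  (bd M).domRestrict (Fix M.α)

lemma Vv_add_mem_range {a b : M.D} (h : M.Reach a b) :
    Vv M a + Vv M b ∈ LinearMap.range (bdr M) := by
  induction h with
  | rel a b hab =>
      rcases hab with h | h
      · rw [h, Vv_sigma, fn2]
        exact Submodule.zero_mem _
      · rw [h]
        exact ⟨⟨pr M a, pr_mem_fix M a⟩, bd_pr M a⟩
  | refl a =>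
      rw [fn2]
      exact Submodule.zero_mem _
  | symm a b _ ih => rwa [add_comm]
  | trans a b c _ _ ih1 ih2 =>
      have := Submodule.add_mem _ ih1 ih2
      have he : (Vv M a + Vv M b) + (Vv M b + Vv M c)
          = (Vv M a + Vv M c) + (Vv M b + Vv M b) := by abel
      rwa [he, fn2, add_zero] at this

lemma ker_wF_le (hconn : M.Connected) :
    LinearMap.ker (wF M) ≤ Submodule.span (ZMod 2) {(fun _ => 1 : QF M → ZMod 2)} := by
  intro t ht
  rw [LinearMap.mem_ker] at ht
  have hflat : ∀ d, t (mkF M (M.α d)) = t (mkF M d) := by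
    intro d
    have h0 : t (mkF M d) + t (mkF M (M.α d)) = 0 := congrFun ht d
    calc t (mkF M (M.α d)) = t (mkF M d) + (t (mkF M d) + t (mkF M (M.α d))) := by
          rw [← add_assoc, z2, zero_add]
      _ = t (mkF M d) := by rw [h0, add_zero]
  have hstep : ∀ a b : M.D, M.Reach a b → t (mkF M a) = t (mkF M b) := by
    intro a b h
    induction h with
    | rel a b hab =>
        rcases hab with h | h
        · rw [h, ← mkF_alpha, hflat]
        · rw [h, hflat]
    | refl a => rfl
    | symm a b _ ih => exact ih.symm
    | trans a b c _ _ ih1 ih2 => exact ih1.trans ih2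
  by_cases hD : Nonempty M.D
  · obtain ⟨d₀⟩ := hD
    have ht0 : t = (t (mkF M d₀)) • (fun _ => 1 : QF M → ZMod 2) := by
      funext q
      induction q using Quotient.ind with
      | _ d =>
        show t (mkF M d) = t (mkF M d₀) • 1
        rw [smul_eq_mul, mul_one]
        exact (hstep d₀ d (hconn d₀ d)).symm
    rw [ht0]
    exact Submodule.smul_mem _ _ (Submodule.subset_span rfl)
  · have ht0 : t = (0 : ZMod 2) • (fun _ => 1 : QF M → ZMod 2) := by
      funext q
      induction q using Quotient.ind with
      | _ d => exact absurd ⟨d⟩ hD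
    rw [ht0]
    exact Submodule.smul_mem _ _ (Submodule.subset_span rfl)

lemma span_singleton_finrank {Vt : Type} [AddCommGroup Vt] [Module (ZMod 2) Vt] (v : Vt) :
    finrank (ZMod 2) (Submodule.span (ZMod 2) {v}) ≤ 1 := by
  by_cases h : v = 0
  · rw [h, Submodule.span_zero_singleton]
    simp [finrank_bot]
  · rw [finrank_span_singleton h]

set_option linter.unusedSectionVars false in
lemma finrank_fix_eq (f : Equiv.Perm M.D) :
    finrank (ZMod 2) (Fix f) = Nat.card (Quotient (M.orbitSetoid f)) :=
  finrank_fix f (M.orbitSetoid f) (fun _ _ => Iff.rfl)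

lemma nC_one (hconn : M.Connected) (hD : Nonempty M.D) : M.nC = 1 := by
  rw [CombMap.nC, Nat.card_eq_one_iff_unique]
  refine ⟨⟨fun x y => ?_⟩, ⟨Quotient.mk _ hD.some⟩⟩
  induction x using Quotient.ind with | _ a =>
  induction y using Quotient.ind with | _ b =>
  exact Quotient.sound (hconn a b)

set_option maxHeartbeats 1000000 in
set_option synthInstance.maxHeartbeats 400000 in
theorem Z_eq_F (hplanar : M.Planar) (hconn : M.Connected) (hD : Nonempty M.D) :
    LinearMap.ker (bd M) ⊓ Fix M.α = LinearMap.range (wF M) := by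
  classical
  haveI : Fintype (QF M) := Fintype.ofFinite _
  obtain ⟨d₀⟩ := hD
  -- F ≤ Z
  have hFZ : LinearMap.range (wF M) ≤ LinearMap.ker (bd M) ⊓ Fix M.α := by
    rintro _ ⟨t, rfl⟩
    exact ⟨by rw [SetLike.mem_coe, LinearMap.mem_ker]; exact bd_wF M t, wF_mem_fix M t⟩
  -- dimension of Z
  have hcomap : Submodule.comap (Fix M.α).subtype (LinearMap.ker (bd M) ⊓ Fix M.α)
      = LinearMap.ker (bdr M) := by
    ext x
    simp only [Submodule.mem_comap, Submodule.mem_inf, LinearMap.mem_ker,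
      Submodule.coe_subtype, bdr, LinearMap.domRestrict_apply]
    exact ⟨fun h => h.1, fun h => ⟨h, x.2⟩⟩
  have hdimZ : finrank (ZMod 2) (LinearMap.ker (bdr M))
      = finrank (ZMod 2) (LinearMap.ker (bd M) ⊓ Fix M.α : Submodule (ZMod 2) _) := by
    rw [← hcomap]
    exact (Submodule.comapSubtypeEquivOfLe
      (inf_le_right : LinearMap.ker (bd M) ⊓ Fix M.α ≤ Fix M.α)).finrank_eq
  have hrn1 := LinearMap.finrank_range_add_finrank_ker (bdr M)
  have hXE : finrank (ZMod 2) (Fix M.α) = M.nE := by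
    rw [CombMap.nE]; exact finrank_fix_eq M M.α
  -- lower bound on the rank of bdr
  have hVb : Fix M.σ ≤ LinearMap.range (bdr M) ⊔ Submodule.span (ZMod 2) {Vv M d₀} := by
    refine le_trans (fix_sigma_le_span M) (Submodule.span_le.mpr ?_)
    rintro _ ⟨a, rfl⟩
    have h1 : Vv M a + Vv M d₀ ∈ LinearMap.range (bdr M) := Vv_add_mem_range M (hconn a d₀)
    have h2 : Vv M a = (Vv M a + Vv M d₀) + Vv M d₀ := by rw [add_assoc, fn2, add_zero]
    rw [h2]
    exact Submodule.add_mem _ (Submodule.mem_sup_left h1)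
      (Submodule.mem_sup_right (Submodule.subset_span rfl))
  have hnV : M.nV ≤ finrank (ZMod 2) (LinearMap.range (bdr M)) + 1 := by
    have h1 : M.nV ≤ finrank (ZMod 2)
        ((LinearMap.range (bdr M) ⊔ Submodule.span (ZMod 2) {Vv M d₀} :
          Submodule (ZMod 2) (M.D → ZMod 2))) := by
      rw [CombMap.nV, ← finrank_fix_eq M M.σ]
      exact Submodule.finrank_mono hVb
    have h2 := Submodule.finrank_sup_add_finrank_inf_eq
      (LinearMap.range (bdr M)) (Submodule.span (ZMod 2) {Vv M d₀})
    have h3 := span_singleton_finrank (Vv M d₀)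
    omega
  -- dimension of F
  have hrn2 := LinearMap.finrank_range_add_finrank_ker (wF M)
  have hQF : finrank (ZMod 2) (QF M → ZMod 2) = M.nF := by
    rw [finrank_pi, CombMap.nF, Nat.card_eq_fintype_card]
  have hkw : finrank (ZMod 2) (LinearMap.ker (wF M)) ≤ 1 := by
    refine le_trans (Submodule.finrank_mono (ker_wF_le M hconn)) ?_
    exact span_singleton_finrank _
  -- Euler
  have hc1 : M.nC = 1 := nC_one M hconn ⟨d₀⟩
  have heuler : M.nV + M.nF = M.nE + 2 := by
    have h := hplanar
    rw [CombMap.Planar, hc1] at h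
    push_cast at h
    omega
  -- compare
  have hmono : finrank (ZMod 2) (LinearMap.range (wF M))
      ≤ finrank (ZMod 2) (LinearMap.ker (bd M) ⊓ Fix M.α : Submodule (ZMod 2) _) :=
    Submodule.finrank_mono hFZ
  refine (Submodule.eq_of_le_of_finrank_le hFZ ?_).symm
  omega

/-- weight of a dart: 1 on non-matching darts -/
noncomputable def mwt (d : M.D) : ZMod 2 := if d ∈ S then 0 else 1

lemma mu_pr' (a : M.D) (hS : ∀ d, d ∈ S ↔ M.α d ∈ S) :
    mu M S (pr M a) = mwt M S a := by
  by_cases ha : a ∈ S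
  · have : mwt M S a = 0 := by simp [mwt, ha]
    rw [this]
    calc mu M S (pr M a)
        = ∑ d ∈ musupp M S, pr M a d := rfl
      _ = ∑ d ∈ musupp M S,
          ((if d = a then (1:ZMod 2) else 0) + (if M.α d = a then 1 else 0)) := by
          refine Finset.sum_congr rfl fun d _ => ?_
          unfold pr
          congr 1
          refine if_congr ?_ rfl rfl
          exact ⟨fun h => by rw [h, M.α_invol], fun h => by rw [← h, M.α_invol]⟩
      _ = ∑ d ∈ nsupp M S, (if d = a then (1:ZMod 2) else 0) :=
          pair_sum M S (fun d => if d = a then (1:ZMod 2) else 0) hS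
      _ = if a ∈ nsupp M S then 1 else 0 :=
          Finset.sum_ite_eq' (nsupp M S) a (fun _ => (1:ZMod 2))
      _ = 0 := by simp [nsupp, ha]
  · have : mwt M S a = 1 := by simp [mwt, ha]
    rw [this]
    exact mu_pr M S a ha hS

/-- one step in the two-fold cover -/
def CStep (a b : M.D × ZMod 2) : Prop :=
  (b.1 = M.σ a.1 ∧ b.2 = a.2) ∨ (b.1 = M.α a.1 ∧ b.2 = a.2 + mwt M S a.1)

def CRel : M.D × ZMod 2 → M.D × ZMod 2 → Prop := Relation.EqvGen (CStep M S)

lemma crel_shift {p q : M.D × ZMod 2} (h : CRel M S p q) :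
    CRel M S (p.1, p.2 + 1) (q.1, q.2 + 1) := by
  induction h with
  | rel a b hab =>
      refine Relation.EqvGen.rel _ _ ?_
      rcases hab with ⟨h1, h2⟩ | ⟨h1, h2⟩
      · exact Or.inl ⟨h1, by rw [h2]⟩
      · refine Or.inr ⟨h1, ?_⟩
        rw [h2]; ring
  | refl a => exact Relation.EqvGen.refl _
  | symm a b _ ih => exact Relation.EqvGen.symm _ _ ih
  | trans a b c _ _ ih1 ih2 => exact Relation.EqvGen.trans _ _ _ ih1 ih2

lemma crel_shift' {a b : M.D} {s t : ZMod 2} (h : CRel M S (a, s) (b, t)) :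
    CRel M S (a, s + 1) (b, t + 1) := crel_shift M S h

lemma crel_lift {a b : M.D} (h : M.Reach a b) :
    ∃ ε : ZMod 2, ∀ s, CRel M S (a, s) (b, s + ε) := by
  induction h with
  | rel a b hab =>
      rcases hab with h | h
      · exact ⟨0, fun s => Relation.EqvGen.rel _ _ (Or.inl ⟨h, add_zero s⟩)⟩
      · exact ⟨mwt M S a, fun s => Relation.EqvGen.rel _ _ (Or.inr ⟨h, rfl⟩)⟩
  | refl a => exact ⟨0, fun s => by rw [add_zero]; exact Relation.EqvGen.refl _⟩
  | symm a b _ ih =>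
      obtain ⟨ε, hε⟩ := ih
      refine ⟨ε, fun s => ?_⟩
      have h1 := hε (s + ε)
      have h2 : s + ε + ε = s := by rw [add_assoc, z2, add_zero]
      rw [h2] at h1
      exact Relation.EqvGen.symm _ _ h1
  | trans a b c _ _ ih1 ih2 =>
      obtain ⟨ε1, h1⟩ := ih1
      obtain ⟨ε2, h2⟩ := ih2
      refine ⟨ε1 + ε2, fun s => ?_⟩
      have h3 := h2 (s + ε1)
      have he : s + ε1 + ε2 = s + (ε1 + ε2) := by ring
      rw [he] at h3
      exact Relation.EqvGen.trans _ _ _ (h1 s) h3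

lemma crel_chain (hS : ∀ d, d ∈ S ↔ M.α d ∈ S) {p q : M.D × ZMod 2}
    (h : CRel M S p q) :
    ∃ z : M.D → ZMod 2, z ∈ Fix M.α ∧ bd M z = Vv M p.1 + Vv M q.1 ∧
      mu M S z = p.2 + q.2 := by
  induction h with
  | rel a b hab =>
      rcases hab with ⟨h1, h2⟩ | ⟨h1, h2⟩
      · refine ⟨0, Submodule.zero_mem _, ?_, ?_⟩
        · rw [map_zero, h1, Vv_sigma, fn2]
        · rw [map_zero, h2, z2]
      · refine ⟨pr M a.1, pr_mem_fix M a.1, ?_, ?_⟩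
        · rw [bd_pr, h1]
        · rw [mu_pr' M S a.1 hS, h2, ← add_assoc, z2, zero_add]
  | refl a => exact ⟨0, Submodule.zero_mem _, by rw [map_zero, fn2], by rw [map_zero, z2]⟩
  | symm a b _ ih =>
      obtain ⟨z, hz1, hz2, hz3⟩ := ih
      exact ⟨z, hz1, by rw [hz2, add_comm], by rw [hz3, add_comm]⟩
  | trans a b c _ _ ih1 ih2 =>
      obtain ⟨u1, hu1, hb1, hm1⟩ := ih1
      obtain ⟨u2, hu2, hb2, hm2⟩ := ih2
      refine ⟨u1 + u2, Submodule.add_mem _ hu1 hu2, ?_, ?_⟩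
      · rw [map_add, hb1, hb2]
        have : (Vv M a.1 + Vv M b.1) + (Vv M b.1 + Vv M c.1)
            = (Vv M a.1 + Vv M c.1) + (Vv M b.1 + Vv M b.1) := by abel
        rw [this, fn2, add_zero]
      · rw [map_add, hm1, hm2]
        have : (a.2 + b.2) + (b.2 + c.2) = (a.2 + c.2) + (b.2 + b.2) := by ring
        rw [this, z2, add_zero]

lemma no_monodromy (hplanar : M.Planar) (hconn : M.Connected)
    (htri : M.Triangulated)
    (hS : ∀ d, d ∈ S ↔ M.α d ∈ S)
    (hmatch : ∀ d : M.D, ∃! d' : M.D, d' ∈ S ∧ M.SameFace d d')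
    (d : M.D) : ¬ CRel M S (d, 0) (d, 1) := by
  intro h
  obtain ⟨z, hz1, hz2, hz3⟩ := crel_chain M S hS h
  have hzZ : z ∈ LinearMap.ker (bd M) ⊓ Fix M.α := by
    refine ⟨?_, hz1⟩
    rw [SetLike.mem_coe, LinearMap.mem_ker, hz2, fn2]
  rw [Z_eq_F M hplanar hconn ⟨d⟩] at hzZ
  obtain ⟨t, ht⟩ := hzZ
  have h0 : mu M S z = 0 := by
    rw [← ht]
    exact mu_wF_zero M S htri hmatch hS t
  rw [hz3] at h0
  simp at h0
end Main
end DMProof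

open DMProof

/-- Let `G` be a plane triangulated multigraph without
loops, and let `S` be a set of edges of `G` (a set of darts closed under
the edge-involution) whose dual edges form a perfect matching of the
dual graph `G*`, i.e. every face of `G` carries exactly one dart of `S`.
Then the subgraph `H = (V(G), E(G) \ S)` is bipartite (it admits a
proper 2-coloring `c` of the vertices of `G`, constant on the rotation
at each vertex, separating the endpoints of each edge not in `S`), and
for every angle of `G` (a pair of darts `a`, `σ a` consecutive in the
rotation at a vertex) at least one of its two edges belongs to `H`. -/
theorem dual_matching_gives_bipartite_angle_cover (M : CombMap)
    (hplanar : M.Planar) (hconn : M.Connected)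
    (htri : M.Triangulated) (hloop : M.Loopless)
    (S : Set M.D) (hSedge : ∀ d, d ∈ S ↔ M.α d ∈ S)
    (hmatch : ∀ d : M.D, ∃! d' : M.D, d' ∈ S ∧ M.SameFace d d') :
    (∃ c : M.D → Bool, (∀ d, c (M.σ d) = c d) ∧
        ∀ d ∉ S, c (M.α d) ≠ c d) ∧
      ∀ a : M.D, a ∉ S ∨ M.σ a ∉ S := by
  classical
  constructor
  · -- bipartiteness
    rcases isEmpty_or_nonempty M.D with hD | hD
    · exact ⟨fun _ => true, fun d => isEmptyElim d, fun d _ => isEmptyElim d⟩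
    obtain ⟨d₀⟩ := hD
    have hnm : ∀ d, ¬ CRel M S (d, 0) (d, 1) :=
      no_monodromy M S hplanar hconn htri hSedge hmatch
    have hz01 : ∀ t : ZMod 2, t = 0 ∨ t = 1 := by decide
    have hmono : ∀ (d : M.D) (t t' : ZMod 2), CRel M S (d₀, 0) (d, t) →
        CRel M S (d₀, 0) (d, t') → t = t' := by
      intro d t t' h1 h2
      by_contra hne
      have hrel : CRel M S (d, t) (d, t') :=
        Relation.EqvGen.trans _ _ _ (Relation.EqvGen.symm _ _ h1) h2
      have ht' : t' = t + 1 := by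
        rcases hz01 t with rfl | rfl <;> rcases hz01 t' with rfl | rfl <;>
          first | rfl | (exfalso; exact hne rfl) | decide
      rw [ht'] at hrel
      rcases hz01 t with rfl | rfl
      · exact hnm d hrel
      · have hsh := crel_shift' M S hrel
        have e1 : (1 : ZMod 2) + 1 = 0 := by decide
        rw [e1, zero_add] at hsh
        exact hnm d hsh
    have hex : ∀ d : M.D, ∃ t, CRel M S (d₀, 0) (d, t) := by
      intro d
      obtain ⟨ε, hε⟩ := crel_lift M S (hconn d₀ d)
      exact ⟨0 + ε, hε 0⟩
    set y : M.D → ZMod 2 := fun d => if CRel M S (d₀, 0) (d, 0) then 0 else 1 with hy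
    have hysig : ∀ d, y (M.σ d) = y d := by
      intro d
      have hstep : CRel M S (d, 0) (M.σ d, 0) :=
        Relation.EqvGen.rel _ _ (Or.inl ⟨rfl, rfl⟩)
      show (if CRel M S (d₀, 0) (M.σ d, 0) then (0:ZMod 2) else 1) = _
      refine if_congr ⟨fun h => ?_, fun h => ?_⟩ rfl rfl
      · exact Relation.EqvGen.trans _ _ _ h (Relation.EqvGen.symm _ _ hstep)
      · exact Relation.EqvGen.trans _ _ _ h hstep
    have hyalf : ∀ d ∉ S, y (M.α d) ≠ y d := by
      intro d hd
      have hm1 : mwt M S d = 1 := by simp [mwt, hd]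
      have hstep : CRel M S (d, 0) (M.α d, 1) := by
        refine Relation.EqvGen.rel _ _ (Or.inr ⟨rfl, ?_⟩)
        show (1 : ZMod 2) = 0 + mwt M S d
        rw [hm1, zero_add]
      by_cases hc : CRel M S (d₀, 0) (d, 0)
      · have hyd : y d = 0 := if_pos hc
        have hna : ¬ CRel M S (d₀, 0) (M.α d, 0) := by
          intro hx
          have h1 : CRel M S (d₀, 0) (M.α d, 1) :=
            Relation.EqvGen.trans _ _ _ hc hstep
          exact hnm (M.α d)
            (Relation.EqvGen.trans _ _ _ (Relation.EqvGen.symm _ _ hx) h1)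
        have hya : y (M.α d) = 1 := if_neg hna
        rw [hya, hyd]; decide
      · have hyd : y d = 1 := if_neg hc
        obtain ⟨t, ht⟩ := hex d
        have ht1 : t = 1 := by
          rcases hz01 t with rfl | rfl
          · exact absurd ht hc
          · rfl
        rw [ht1] at ht
        have hsh := crel_shift' M S hstep
        have e1 : (0 : ZMod 2) + 1 = 1 := by decide
        have e2 : (1 : ZMod 2) + 1 = 0 := by decide
        rw [e1, e2] at hsh
        have hca : CRel M S (d₀, 0) (M.α d, 0) :=
          Relation.EqvGen.trans _ _ _ ht hsh
        have hya : y (M.α d) = 0 := if_pos hca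
        rw [hya, hyd]; decide
    refine ⟨fun d => decide (y d = 1), fun d => ?_, fun d hd => ?_⟩
    · show decide (y (M.σ d) = 1) = decide (y d = 1)
      rw [hysig d]
    have hne := hyalf d hd
    revert hne
    have hb : ∀ u v : ZMod 2, u ≠ v → decide (u = 1) ≠ decide (v = 1) := by decide
    exact fun h => hb _ _ h
  · -- angle condition
    intro a
    by_contra hcon
    push_neg at hcon
    obtain ⟨ha, hsa⟩ := hcon
    have haa : M.α a ∈ S := (hSedge a).mp ha
    have hface : M.SameFace (M.α a) (M.σ a) := by
      have h1 : M.φ (M.α a) = M.σ a := by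
        show M.σ (M.α (M.α a)) = M.σ a
        rw [M.α_invol]
      exact h1 ▸ DMProof.sc_step M.φ (M.α a)
    have heq : M.α a = M.σ a := unique_S_face M S hmatch haa hsa hface
    have hloopd : M.IsLoopDart a := by
      show M.σ.SameCycle a (M.α a)
      rw [heq]
      exact DMProof.sc_step M.σ a
    exact hloop a hloopd
end

section
/- A plane multigraph in which every face has even degree is bipartite. -/
open Equiv Equiv.Perm

namespace BipAux

variable {D : Type} [Fintype D] [DecidableEq D]

def sameCycleSetoid (p : Perm D) : Setoid D :=
  ⟨p.SameCycle, ⟨fun x => SameCycle.refl p x, fun h => h.symm, fun h h' => h.trans h'⟩⟩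

noncomputable def cyc (p : Perm D) : ℕ := Nat.card (Quotient (sameCycleSetoid p))

def stepRel (x y : Perm D) (a b : D) : Prop := b = x a ∨ b = y a

def reachSetoid (x y : Perm D) : Setoid D :=
  ⟨Relation.EqvGen (stepRel x y), Relation.EqvGen.is_equivalence _⟩

noncomputable def comps (x y : Perm D) : ℕ := Nat.card (Quotient (reachSetoid x y))

/-- relation obtained by merging the classes of `a` and `b`. -/
def mrg (s : Setoid D) (a b : D) (z w : D) : Prop :=
  s.r z w ∨ (s.r z a ∧ s.r b w) ∨ (s.r z b ∧ s.r a w)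

def mrgSetoid (s : Setoid D) (a b : D) : Setoid D := by
  refine ⟨mrg s a b, ⟨fun z => Or.inl (s.refl z), ?_, ?_⟩⟩
  · rintro z w (h | ⟨h1, h2⟩ | ⟨h1, h2⟩)
    · exact Or.inl (s.symm h)
    · exact Or.inr (Or.inr ⟨s.symm h2, s.symm h1⟩)
    · exact Or.inr (Or.inl ⟨s.symm h2, s.symm h1⟩)
  · rintro z w t (h | ⟨h1, h2⟩ | ⟨h1, h2⟩) (h' | ⟨h1', h2'⟩ | ⟨h1', h2'⟩)
    · exact Or.inl (s.trans h h')
    · exact Or.inr (Or.inl ⟨s.trans h h1', h2'⟩)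
    · exact Or.inr (Or.inr ⟨s.trans h h1', h2'⟩)
    · exact Or.inr (Or.inl ⟨h1, s.trans h2 h'⟩)
    · exact Or.inl (s.trans (s.trans h1 (s.symm (s.trans h2 h1'))) h2')
    · exact Or.inl (s.trans h1 h2')
    · exact Or.inr (Or.inr ⟨h1, s.trans h2 h'⟩)
    · exact Or.inl (s.trans h1 h2')
    · exact Or.inl (s.trans (s.trans h1 (s.symm (s.trans h2 h1'))) h2')

theorem card_quot_mrg (s : Setoid D) {a b : D} (h : ¬ s.r a b) :
    Nat.card (Quotient (mrgSetoid s a b)) + 1 = Nat.card (Quotient s) := by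
  classical
  have key : Nat.card (Quotient (mrgSetoid s a b)) =
      Nat.card {q : Quotient s // q ≠ Quotient.mk s b} := by
    refine (Nat.card_eq_of_bijective
      (fun q => Quotient.lift (fun z => (Quotient.mk (mrgSetoid s a b) z))
        (fun z w hzw => Quotient.sound (Or.inl hzw)) q.1) ⟨?_, ?_⟩).symm
    · rintro ⟨q1, hq1⟩ ⟨q2, hq2⟩ hf
      obtain ⟨z, rfl⟩ := Quotient.exists_rep q1
      obtain ⟨w, rfl⟩ := Quotient.exists_rep q2
      have := Quotient.exact (hf : Quotient.mk (mrgSetoid s a b) z = Quotient.mk _ w)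
      rcases this with h0 | ⟨h1, h2⟩ | ⟨h1, h2⟩
      · exact Subtype.ext (Quotient.sound h0)
      · exact absurd (Quotient.sound (s.symm h2)) hq2
      · exact absurd (Quotient.sound h1) hq1
    · intro q
      obtain ⟨z, rfl⟩ := Quotient.exists_rep q
      by_cases hzb : s.r z b
      · refine ⟨⟨Quotient.mk s a, fun he => h (Quotient.exact he)⟩, ?_⟩
        exact Quotient.sound (Or.inr (Or.inl ⟨s.refl a, s.symm hzb⟩))
      · exact ⟨⟨Quotient.mk s z, fun he => hzb (Quotient.exact he)⟩, rfl⟩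
  rw [key]
  have := Nat.card_congr (Equiv.optionSubtypeNe (Quotient.mk s b)).symm
  rw [Finite.card_option] at this
  omega


def mrg' (p : Perm D) (u v z w : D) : Prop :=
  p.SameCycle z w ∨ (p.SameCycle z u ∧ p.SameCycle v w) ∨ (p.SameCycle z v ∧ p.SameCycle u w)

theorem pow_apply_pos_period {g : Perm D} {t : D} {m : ℕ} (hm : (g ^ m) t = t) (s : ℕ) :
    ((g ^ m) ^ s) t = t := by
  induction s with
  | zero => simp
  | succ s ih => rw [pow_succ', mul_apply, ih, hm]

theorem pow_apply_mod {g : Perm D} {t : D} {m : ℕ} (hm : (g ^ m) t = t) (j : ℕ) :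
    (g ^ j) t = (g ^ (j % m)) t := by
  conv_lhs => rw [← Nat.div_add_mod j m, add_comm, pow_add, mul_apply, pow_mul,
    pow_apply_pos_period hm]

theorem sameCycle_of_pow_nat {p : Perm D} {z w : D} {k : ℕ} (h : (p ^ k) z = w) :
    p.SameCycle z w := ⟨(k : ℤ), by rw [zpow_natCast, h]⟩

theorem mrg'_of_swap_mul {p : Perm D} {u v z w : D}
    (h : (Equiv.swap u v * p).SameCycle z w) : mrg' p u v z w := by
  set q := Equiv.swap u v * p with hq
  have hstep : ∀ t, mrg' p u v t (q t) := by
    intro t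
    have hqt : q t = Equiv.swap u v (p t) := rfl
    by_cases h1 : p t = u
    · rw [hqt, h1, Equiv.swap_apply_left]
      exact Or.inr (Or.inl ⟨⟨1, by simpa using h1⟩, SameCycle.refl _ _⟩)
    · by_cases h2 : p t = v
      · rw [hqt, h2, Equiv.swap_apply_right]
        exact Or.inr (Or.inr ⟨⟨1, by simpa using h2⟩, SameCycle.refl _ _⟩)
      · rw [hqt, Equiv.swap_apply_of_ne_of_ne h1 h2]
        exact Or.inl ⟨1, by simp⟩
  have htrans : ∀ a b c, mrg' p u v a b → mrg' p u v b c → mrg' p u v a c := by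
    intro a b c hab hbc
    exact (mrgSetoid (sameCycleSetoid p) u v).trans hab hbc
  have hpow : ∀ k : ℕ, ∀ t, mrg' p u v t ((q ^ k) t) := by
    intro k
    induction k with
    | zero => intro t; rw [pow_zero, one_apply]; exact Or.inl (SameCycle.refl p t)
    | succ k ih =>
      intro t
      have : (q ^ (k+1)) t = (q ^ k) (q t) := by rw [pow_succ, mul_apply]
      rw [this]
      exact htrans _ _ _ (hstep t) (ih (q t))
  obtain ⟨i, _, rfl⟩ := h.exists_pow_eq'
  exact hpow i z

theorem sameCycle_swap_mul_of_not {p : Perm D} {u v : D} (h : ¬ p.SameCycle u v) :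
    (Equiv.swap u v * p).SameCycle u v := by
  set q := Equiv.swap u v * p with hq
  set n := Function.minimalPeriod (⇑p) u with hn
  have hper : u ∈ Function.periodicPts (⇑p) :=
    ⟨orderOf p, orderOf_pos p, by
      simp only [Function.IsPeriodicPt, Function.IsFixedPt, iterate_eq_pow,
        pow_orderOf_eq_one p, one_apply]⟩
  have hnpos : 0 < n := Function.minimalPeriod_pos_of_mem_periodicPts hper
  have hpn : (p ^ n) u = u := by
    rw [hn, ← iterate_eq_pow]
    exact Function.iterate_minimalPeriod
  have key : ∀ k ≤ n, (q ^ k) u = if k = n then v else (p ^ k) u := by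
    intro k hk
    induction k with
    | zero =>
      rw [if_neg (by omega)]
      simp
    | succ k ih =>
      have hk' : k ≤ n := by omega
      have ihk := ih hk'
      rw [if_neg (by omega)] at ihk
      have hstep : (q ^ (k+1)) u = Equiv.swap u v ((p ^ (k+1)) u) := by
        rw [pow_succ', mul_apply, ihk, hq, mul_apply]
        congr 1
        rw [← mul_apply, ← pow_succ']
      by_cases hkn : k + 1 = n
      · rw [if_pos hkn, hstep, hkn, hpn, Equiv.swap_apply_left]
      · rw [if_neg hkn, hstep]
        have h1 : (p ^ (k+1)) u ≠ u := by
          intro hc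
          have : n ∣ k + 1 := Function.IsPeriodicPt.minimalPeriod_dvd
            (by unfold Function.IsPeriodicPt Function.IsFixedPt; rw [iterate_eq_pow]; exact hc)
          have := Nat.le_of_dvd (by omega) this
          omega
        have h2 : (p ^ (k+1)) u ≠ v := fun hc => h (sameCycle_of_pow_nat hc)
        exact Equiv.swap_apply_of_ne_of_ne h1 h2
  have := key n le_rfl
  rw [if_pos rfl] at this
  exact sameCycle_of_pow_nat this

theorem not_sameCycle_swap_mul_of {p : Perm D} {u v : D} (hne : u ≠ v)
    (h : p.SameCycle u v) : ¬ (Equiv.swap u v * p).SameCycle u v := by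
  classical
  set q := Equiv.swap u v * p with hq
  set n := Function.minimalPeriod (⇑p) u with hn
  have hper : u ∈ Function.periodicPts (⇑p) :=
    ⟨orderOf p, orderOf_pos p, by
      simp only [Function.IsPeriodicPt, Function.IsFixedPt, iterate_eq_pow,
        pow_orderOf_eq_one p, one_apply]⟩
  have hnpos : 0 < n := Function.minimalPeriod_pos_of_mem_periodicPts hper
  have hpn : (p ^ n) u = u := by
    rw [hn, ← iterate_eq_pow]
    exact Function.iterate_minimalPeriod
  have hex : ∃ m : ℕ, (p ^ m) u = v := by
    obtain ⟨i, _, hi⟩ := h.exists_pow_eq'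
    exact ⟨i, hi⟩
  set m := Nat.find hex with hm
  have hmv : (p ^ m) u = v := Nat.find_spec hex
  have hmmin : ∀ j < m, (p ^ j) u ≠ v := fun j hj => Nat.find_min hex hj
  have hmpos : 0 < m := by
    rcases Nat.eq_zero_or_pos m with h0 | h0
    · exfalso; apply hne; rw [← hmv, h0]; simp
    · exact h0
  have hmn : m < n := by
    by_contra hge
    push_neg at hge
    have : (p ^ (m - n)) u = v := by
      have : (p ^ (m - n)) ((p ^ n) u) = v := by
        rw [← mul_apply, ← pow_add]
        rw [Nat.sub_add_cancel hge, hmv]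
      rwa [hpn] at this
    rcases Nat.eq_or_lt_of_le hge with heq | hlt
    · apply hne
      have h0 : m - n = 0 := by omega
      rw [h0] at this
      simpa using this
    · exact hmmin (m - n) (by omega) this
  have key : ∀ k ≤ m, (q ^ k) u = if k = m then u else (p ^ k) u := by
    intro k hk
    induction k with
    | zero =>
      rcases Nat.eq_zero_or_pos m with h0 | h0
      · omega
      · rw [if_neg (by omega)]; simp
    | succ k ih =>
      have ihk := ih (by omega)
      rw [if_neg (by omega)] at ihk
      have hstep : (q ^ (k+1)) u = Equiv.swap u v ((p ^ (k+1)) u) := by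
        rw [pow_succ', mul_apply, ihk, hq, mul_apply]
        congr 1
        rw [← mul_apply, ← pow_succ']
      by_cases hkm : k + 1 = m
      · rw [if_pos hkm, hstep, hkm, hmv, Equiv.swap_apply_right]
      · rw [if_neg hkm, hstep]
        have h1 : (p ^ (k+1)) u ≠ u := by
          intro hc
          have : n ∣ k + 1 := Function.IsPeriodicPt.minimalPeriod_dvd
            (by unfold Function.IsPeriodicPt Function.IsFixedPt; rw [iterate_eq_pow]; exact hc)
          have := Nat.le_of_dvd (by omega) this
          omega
        have h2 : (p ^ (k+1)) u ≠ v := hmmin _ (by omega)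
        exact Equiv.swap_apply_of_ne_of_ne h1 h2
  have hqm : (q ^ m) u = u := by have := key m le_rfl; rwa [if_pos rfl] at this
  intro hcon
  obtain ⟨j, _, hj⟩ := hcon.exists_pow_eq'
  rw [pow_apply_mod hqm] at hj
  have hjm : j % m < m := Nat.mod_lt _ hmpos
  have := key (j % m) (le_of_lt hjm)
  rw [if_neg (by omega)] at this
  rw [this] at hj
  exact hmmin _ hjm hj


theorem cyc_swap_mul_of_not_sameCycle {p : Perm D} {u v : D} (h : ¬ p.SameCycle u v) :
    cyc (Equiv.swap u v * p) + 1 = cyc p := by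
  have huv : (Equiv.swap u v * p).SameCycle u v := sameCycle_swap_mul_of_not h
  have hsub : ∀ z w, p.SameCycle z w → (Equiv.swap u v * p).SameCycle z w := by
    intro z w hzw
    rw [← swap_mul_self_mul u v p] at hzw
    rcases mrg'_of_swap_mul hzw with h0 | ⟨h1, h2⟩ | ⟨h1, h2⟩
    · exact h0
    · exact (h1.trans huv).trans h2
    · exact (h1.trans huv.symm).trans h2
  have hset : sameCycleSetoid (Equiv.swap u v * p) = mrgSetoid (sameCycleSetoid p) u v := by
    apply Setoid.ext; intro z w
    constructor
    · exact fun hz => mrg'_of_swap_mul hz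
    · rintro (h0 | ⟨h1, h2⟩ | ⟨h1, h2⟩)
      · exact hsub _ _ h0
      · exact ((hsub _ _ h1).trans huv).trans (hsub _ _ h2)
      · exact ((hsub _ _ h1).trans huv.symm).trans (hsub _ _ h2)
  show Nat.card (Quotient (sameCycleSetoid (Equiv.swap u v * p))) + 1 = _
  rw [hset]
  exact card_quot_mrg _ h

theorem cyc_swap_mul_of_sameCycle {p : Perm D} {u v : D} (hne : u ≠ v)
    (h : p.SameCycle u v) : cyc (Equiv.swap u v * p) = cyc p + 1 := by
  have hq := not_sameCycle_swap_mul_of hne h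
  have := cyc_swap_mul_of_not_sameCycle hq
  rw [swap_mul_self_mul] at this
  omega

theorem cyc_le_card (p : Perm D) : cyc p ≤ Fintype.card D := by
  have := Nat.card_le_card_of_surjective (Quotient.mk (sameCycleSetoid p))
    (Quotient.exists_rep)
  simpa [cyc, Nat.card_eq_fintype_card] using this

theorem cyc_one : cyc (1 : Perm D) = Fintype.card D := by
  have : Nat.card D = Nat.card (Quotient (sameCycleSetoid (1 : Perm D))) := by
    refine Nat.card_eq_of_bijective (Quotient.mk (sameCycleSetoid 1)) ⟨?_, Quotient.exists_rep⟩
    intro z w hzw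
    exact (sameCycle_one (x := z) (y := w)).mp (Quotient.exact hzw)
  rw [cyc, ← this, Nat.card_eq_fintype_card]

theorem reach_step_x (x y : Perm D) (z : D) : (reachSetoid x y).r z (x z) :=
  Relation.EqvGen.rel _ _ (Or.inl rfl)

theorem reach_step_y (x y : Perm D) (z : D) : (reachSetoid x y).r z (y z) :=
  Relation.EqvGen.rel _ _ (Or.inr rfl)

theorem reach_closure (x y : Perm D) {w : Perm D}
    (hw : w ∈ Subgroup.closure {x, y}) (z : D) : (reachSetoid x y).r z (w z) := by
  induction hw using Subgroup.closure_induction generalizing z with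
  | mem g hg =>
    rcases hg with hg | hg
    · rw [hg]; exact reach_step_x x y z
    · rw [hg]; exact reach_step_y x y z
  | one => exact (reachSetoid x y).refl z
  | mul a b _ _ pa pb =>
    exact (reachSetoid x y).trans (pb z) (pa (b z))
  | inv a _ pa =>
    have := pa (a⁻¹ z)
    rw [← mul_apply, mul_inv_cancel, one_apply] at this
    exact (reachSetoid x y).symm this

theorem reach_of_sameCycle {x y w : Perm D} (hw : w ∈ Subgroup.closure {x, y})
    {z z' : D} (h : w.SameCycle z z') : (reachSetoid x y).r z z' := by
  obtain ⟨i, rfl⟩ := h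
  exact reach_closure x y (zpow_mem hw i) z

theorem comps_one_right (x : Perm D) : comps x 1 = cyc x := by
  have hset : reachSetoid x 1 = sameCycleSetoid x := by
    apply Setoid.ext; intro z w
    constructor
    · intro h
      induction h with
      | rel a b hab =>
        rcases hab with hab | hab
        · exact ⟨1, by simp [hab]⟩
        · simp only [one_apply] at hab
          rw [hab]
      | refl a => exact SameCycle.refl x a
      | symm a b _ ih => exact ih.symm
      | trans a b c _ _ ih1 ih2 => exact ih1.trans ih2
    · intro h
      exact reach_of_sameCycle (x := x) (y := 1)
        (Subgroup.subset_closure (by simp)) h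
  show Nat.card (Quotient (reachSetoid x 1)) = _
  rw [hset]; rfl

theorem euler_ineq (x y : Perm D) :
    cyc x + cyc y + cyc (x * y) ≤ Fintype.card D + 2 * comps x y := by
  classical
  suffices H : ∀ N, ∀ y : Perm D, Fintype.card D - cyc y ≤ N →
      cyc x + cyc y + cyc (x * y) ≤ Fintype.card D + 2 * comps x y from
    H _ y le_rfl
  intro N
  induction N with
  | zero =>
    intro y hN
    have h1 : cyc y = Fintype.card D := le_antisymm (cyc_le_card y) (by omega)
    have hy1 : y = 1 := by
      have hbij : Function.Bijective (Quotient.mk (sameCycleSetoid y)) :=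
        (Nat.bijective_iff_surjective_and_card _).mpr
          ⟨Quotient.exists_rep, by rw [Nat.card_eq_fintype_card (α := D), ← h1]; rfl⟩
      refine Equiv.ext fun t => ?_
      have := hbij.injective
        (Quotient.sound (⟨1, by simp⟩ : (sameCycleSetoid y).r t (y t)) :
          Quotient.mk (sameCycleSetoid y) t = Quotient.mk (sameCycleSetoid y) (y t))
      simpa using this.symm
    subst hy1
    rw [mul_one, cyc_one, comps_one_right]
    omega
  | succ N ih =>
    intro y hN
    by_cases hy1 : y = 1
    · subst hy1
      rw [mul_one, cyc_one, comps_one_right]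
      omega
    obtain ⟨a, ha⟩ : ∃ a, y a ≠ a := by
      by_contra hall; push_neg at hall
      exact hy1 (Equiv.ext fun t => by simp [hall t])
    set b := y a with hb
    have hab : a ≠ b := fun h => ha h.symm
    set y' := Equiv.swap a b * y with hy'
    have hsplit : cyc y' = cyc y + 1 :=
      cyc_swap_mul_of_sameCycle hab ⟨1, by simp [hb]⟩
    have hy'le : cyc y' ≤ Fintype.card D := cyc_le_card y'
    have hIH := ih y' (by omega)
    have hxab : x a ≠ x b := fun h => hab (x.injective h)
    have hxy' : x * y' = Equiv.swap (x a) (x b) * (x * y) := by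
      rw [swap_apply_apply, hy']
      group
    have hyy' : y = Equiv.swap a b * y' := by rw [hy', swap_mul_self_mul]
    have claim1 : ∀ z w, (reachSetoid x y').r z w → (reachSetoid x y).r z w := by
      intro z w h
      induction h with
      | rel s t hst =>
        rcases hst with hst | hst
        · rw [hst]; exact reach_step_x x y s
        · rw [hst, hy']
          simp only [mul_apply]
          by_cases h1 : y s = a
          · rw [h1, Equiv.swap_apply_left]
            exact (reachSetoid x y).trans (h1 ▸ reach_step_y x y s)
              (reach_step_y x y a)
          · by_cases h2 : y s = b
            · rw [h2, Equiv.swap_apply_right]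
              exact (reachSetoid x y).trans
                (show (reachSetoid x y).r s b from h2 ▸ reach_step_y x y s)
                ((reachSetoid x y).symm (reach_step_y x y a))
            · rw [Equiv.swap_apply_of_ne_of_ne h1 h2]
              exact reach_step_y x y s
      | refl s => exact (reachSetoid x y).refl s
      | symm s t _ ihc => exact (reachSetoid x y).symm ihc
      | trans s t u _ _ ih1 ih2 => exact (reachSetoid x y).trans ih1 ih2
    have hRab : (reachSetoid x y).r a b := reach_step_y x y a
    by_cases hR : (reachSetoid x y').r a b
    · -- subcase A
      have hcompeq : comps x y = comps x y' := by
        have hset : reachSetoid x y = reachSetoid x y' := by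
          apply Setoid.ext; intro z w
          constructor
          · intro h
            induction h with
            | rel s t hst =>
              rcases hst with hst | hst
              · rw [hst]; exact reach_step_x x y' s
              · rw [hst, hyy']
                simp only [mul_apply]
                by_cases h1 : y' s = a
                · rw [h1, Equiv.swap_apply_left]
                  exact (reachSetoid x y').trans (h1 ▸ reach_step_y x y' s) hR
                · by_cases h2 : y' s = b
                  · rw [h2, Equiv.swap_apply_right]
                    exact (reachSetoid x y').trans (h2 ▸ reach_step_y x y' s)
                      ((reachSetoid x y').symm hR)
                  · rw [Equiv.swap_apply_of_ne_of_ne h1 h2]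
                    exact reach_step_y x y' s
            | refl s => exact (reachSetoid x y').refl s
            | symm s t _ ihc => exact (reachSetoid x y').symm ihc
            | trans s t u _ _ ih1 ih2 => exact (reachSetoid x y').trans ih1 ih2
          · exact claim1 z w
        show Nat.card (Quotient (reachSetoid x y)) = Nat.card (Quotient (reachSetoid x y'))
        rw [hset]
      have hcycb : cyc (x * y) ≤ cyc (x * y') + 1 := by
        by_cases hsc : (x * y).SameCycle (x a) (x b)
        · have h2 : cyc (x * y') = cyc (x * y) + 1 := by
            rw [hxy']
            exact cyc_swap_mul_of_sameCycle hxab hsc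
          omega
        · have := cyc_swap_mul_of_not_sameCycle hsc
          rw [← hxy'] at this
          omega
      omega
    · -- subcase B
      have hcompeq : comps x y + 1 = comps x y' := by
        have hset : reachSetoid x y = mrgSetoid (reachSetoid x y') a b := by
          apply Setoid.ext; intro z w
          constructor
          · intro h
            induction h with
            | rel s t hst =>
              rcases hst with hst | hst
              · rw [hst]; exact Or.inl (reach_step_x x y' s)
              · rw [hst, hyy']
                simp only [mul_apply]
                by_cases h1 : y' s = a
                · rw [h1, Equiv.swap_apply_left]
                  exact Or.inr (Or.inl ⟨h1 ▸ reach_step_y x y' s,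
                    (reachSetoid x y').refl b⟩)
                · by_cases h2 : y' s = b
                  · rw [h2, Equiv.swap_apply_right]
                    exact Or.inr (Or.inr ⟨h2 ▸ reach_step_y x y' s,
                      (reachSetoid x y').refl a⟩)
                  · rw [Equiv.swap_apply_of_ne_of_ne h1 h2]
                    exact Or.inl (reach_step_y x y' s)
            | refl s => exact (mrgSetoid (reachSetoid x y') a b).refl s
            | symm s t _ ihc => exact (mrgSetoid (reachSetoid x y') a b).symm ihc
            | trans s t u _ _ ih1 ih2 =>
              exact (mrgSetoid (reachSetoid x y') a b).trans ih1 ih2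
          · rintro (h0 | ⟨h1, h2⟩ | ⟨h1, h2⟩)
            · exact claim1 z w h0
            · exact (reachSetoid x y).trans (claim1 _ _ h1)
                ((reachSetoid x y).trans hRab (claim1 _ _ h2))
            · exact (reachSetoid x y).trans (claim1 _ _ h1)
                ((reachSetoid x y).trans ((reachSetoid x y).symm hRab) (claim1 _ _ h2))
        have := card_quot_mrg (reachSetoid x y') hR
        show Nat.card (Quotient (reachSetoid x y)) + 1 = Nat.card (Quotient (reachSetoid x y'))
        rw [hset]
        exact this
      have hnsc : ¬ (x * y').SameCycle (x a) (x b) := by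
        intro hsc
        apply hR
        have h1 : (reachSetoid x y').r (x a) (x b) :=
          reach_of_sameCycle (mul_mem (Subgroup.subset_closure (by simp))
            (Subgroup.subset_closure (by simp))) hsc
        exact (reachSetoid x y').trans (reach_step_x x y' a)
          ((reachSetoid x y').trans h1 ((reachSetoid x y').symm (reach_step_x x y' b)))
      have hcyceq : cyc (x * y) + 1 = cyc (x * y') := by
        have := cyc_swap_mul_of_not_sameCycle hnsc
        rw [hxy', swap_mul_self_mul] at this
        rw [hxy']
        exact this
      omega

def nb : Equiv.Perm Bool := ⟨Bool.not, Bool.not, Bool.not_not, Bool.not_not⟩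

@[simp] theorem nb_apply (x : Bool) : nb x = !x := rfl

theorem prodCongr_pow_apply {B : Type} [Fintype B] [DecidableEq B]
    (f : Perm D) (g : Perm B) (k : ℕ) (u : D × B) :
    ((Equiv.prodCongr f g) ^ k) u = ((f ^ k) u.1, (g ^ k) u.2) := by
  induction k with
  | zero => simp
  | succ k ih =>
    rw [pow_succ', mul_apply, ih, pow_succ' f k, pow_succ' g k, mul_apply, mul_apply]
    rfl

theorem refl_pow_apply (k : ℕ) (x : Bool) : ((Equiv.refl Bool : Perm Bool) ^ k) x = x := by
  show (((1 : Perm Bool)) ^ k) x = x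
  simp

theorem sameCycle_prodCongr_refl {f : Perm D} {u v : D × Bool} :
    Equiv.Perm.SameCycle (Equiv.prodCongr f (Equiv.refl Bool)) u v ↔
      f.SameCycle u.1 v.1 ∧ u.2 = v.2 := by
  constructor
  · intro h
    obtain ⟨k, _, hk⟩ := h.exists_pow_eq'
    rw [prodCongr_pow_apply] at hk
    refine ⟨sameCycle_of_pow_nat (k := k) ?_, ?_⟩
    · rw [← hk]
    · rw [← hk]
      exact (refl_pow_apply k u.2).symm
  · rintro ⟨h, he⟩
    obtain ⟨k, _, hk⟩ := h.exists_pow_eq'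
    refine sameCycle_of_pow_nat (k := k) ?_
    rw [prodCongr_pow_apply, hk, refl_pow_apply, he]

theorem cyc_prodCongr_refl (f : Perm D) :
    cyc (Equiv.prodCongr f (Equiv.refl Bool)) = 2 * cyc f := by
  classical
  have hbij : Function.Bijective (Quotient.lift
      (fun (u : D × Bool) => ((Quotient.mk (sameCycleSetoid f) u.1), u.2))
      (fun u v (h : Equiv.Perm.SameCycle (Equiv.prodCongr f (Equiv.refl Bool)) u v) => by
        obtain ⟨h1, h2⟩ := sameCycle_prodCongr_refl.mp h
        exact Prod.ext (Quotient.sound h1) h2) :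
      Quotient (sameCycleSetoid (Equiv.prodCongr f (Equiv.refl Bool))) →
        Quotient (sameCycleSetoid f) × Bool) := by
    constructor
    · intro q1 q2
      obtain ⟨u, rfl⟩ := Quotient.exists_rep q1
      obtain ⟨v, rfl⟩ := Quotient.exists_rep q2
      intro h
      replace h := Prod.mk.inj h
      exact Quotient.sound (sameCycle_prodCongr_refl.mpr ⟨Quotient.exact h.1, h.2⟩)
    · rintro ⟨q, x⟩
      obtain ⟨d, rfl⟩ := Quotient.exists_rep q
      exact ⟨Quotient.mk _ (d, x), rfl⟩
  have := Nat.card_eq_of_bijective _ hbij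
  rw [Nat.card_prod] at this
  simp only [Nat.card_eq_fintype_card (α := Bool), Fintype.card_bool] at this
  rw [cyc, cyc, this]
  ring

theorem sameCycle_invol {β : Perm D} (h2 : ∀ t, β (β t) = t) {z w : D} :
    β.SameCycle z w ↔ w = z ∨ w = β z := by
  constructor
  · intro h
    obtain ⟨k, _, hk⟩ := h.exists_pow_eq'
    have hb2 : (β ^ 2) z = z := by
      rw [pow_two, mul_apply]; exact h2 z
    rw [pow_apply_mod hb2 k] at hk
    rcases Nat.mod_two_eq_zero_or_one k with h0 | h0 <;> rw [h0] at hk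
    · left; simpa using hk.symm
    · right; simpa [pow_one] using hk.symm
  · rintro (rfl | rfl)
    · exact SameCycle.refl β _
    · exact ⟨1, by simp⟩

theorem cyc_invol {β : Perm D} (h2 : ∀ t, β (β t) = t) (hf : ∀ t, β t ≠ t) :
    2 * cyc β = Fintype.card D := by
  classical
  have hcard : Fintype.card D =
      ∑ q : Quotient (sameCycleSetoid β), Fintype.card
        {t : D // Quotient.mk (sameCycleSetoid β) t = q} := by
    rw [← Fintype.card_sigma]
    exact Fintype.card_congr (Equiv.sigmaFiberEquiv (Quotient.mk (sameCycleSetoid β))).symm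
  have hfib : ∀ q : Quotient (sameCycleSetoid β), Fintype.card
      {t : D // Quotient.mk (sameCycleSetoid β) t = q} = 2 := by
    intro q
    obtain ⟨z, rfl⟩ := Quotient.exists_rep q
    have he : ∀ t : D, (Quotient.mk (sameCycleSetoid β) t = Quotient.mk (sameCycleSetoid β) z)
        ↔ t ∈ ({z, β z} : Finset D) := by
      intro t
      rw [Finset.mem_insert, Finset.mem_singleton]
      constructor
      · intro h
        rcases (sameCycle_invol h2).mp (Quotient.exact h) with h | h
        · exact Or.inl h.symm
        · right; rw [h, h2]
      · intro h
        rcases h with rfl | rfl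
        · rfl
        · refine Quotient.sound ((sameCycle_invol h2).mpr (Or.inr ?_))
          exact (h2 z).symm
    rw [Fintype.card_congr (Equiv.subtypeEquivRight he), Fintype.card_coe]
    exact Finset.card_pair (Ne.symm (hf z))
  rw [hcard, Finset.sum_congr rfl (fun q _ => hfib q), Finset.sum_const, Finset.card_univ,
    smul_eq_mul, cyc, Nat.card_eq_fintype_card]
  ring

theorem perm_pow_minimalPeriod (p : Perm D) (d : D) :
    (p ^ Function.minimalPeriod (⇑p) d) d = d := by
  rw [← iterate_eq_pow]
  exact Function.iterate_minimalPeriod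

theorem perm_minimalPeriod_pos (p : Perm D) (d : D) :
    0 < Function.minimalPeriod (⇑p) d :=
  Function.minimalPeriod_pos_of_mem_periodicPts
    ⟨orderOf p, orderOf_pos p, by
      simp only [Function.IsPeriodicPt, Function.IsFixedPt, iterate_eq_pow,
        pow_orderOf_eq_one p, one_apply]⟩

theorem cong_mod_period {p : Perm D} {t : D} {a b : ℕ} (h : (p ^ a) t = (p ^ b) t) :
    a % (Function.minimalPeriod (⇑p) t) = b % (Function.minimalPeriod (⇑p) t) := by
  set n := Function.minimalPeriod (⇑p) t with hn
  have hpn : (p ^ n) t = t := perm_pow_minimalPeriod p t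
  rw [pow_apply_mod hpn a, pow_apply_mod hpn b] at h
  have hinj := Function.iterate_injOn_Iio_minimalPeriod (f := ⇑p) (x := t)
  have ha : a % n ∈ Set.Iio n := Set.mem_Iio.mpr (Nat.mod_lt _ (perm_minimalPeriod_pos p t))
  have hb : b % n ∈ Set.Iio n := Set.mem_Iio.mpr (Nat.mod_lt _ (perm_minimalPeriod_pos p t))
  exact hinj ha hb (by simpa [iterate_eq_pow] using h)

theorem orbit_card_eq_minimalPeriod (p : Perm D) (d : D) :
    Nat.card {d' : D // p.SameCycle d d'} = Function.minimalPeriod (⇑p) d := by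
  classical
  set n := Function.minimalPeriod (⇑p) d with hn
  have hpn : (p ^ n) d = d := perm_pow_minimalPeriod p d
  have hbij : Function.Bijective
      (fun k : Fin n => (⟨(p ^ (k : ℕ)) d, sameCycle_of_pow_nat rfl⟩ :
        {d' : D // p.SameCycle d d'})) := by
    constructor
    · intro j k hjk
      simp only [Subtype.mk.injEq] at hjk
      have := cong_mod_period hjk
      rw [Nat.mod_eq_of_lt j.2, Nat.mod_eq_of_lt k.2] at this
      exact Fin.ext this
    · rintro ⟨d', hd'⟩
      obtain ⟨k, _, hk⟩ := hd'.exists_pow_eq'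
      refine ⟨⟨k % n, Nat.mod_lt _ (perm_minimalPeriod_pos p d)⟩, ?_⟩
      simp only [Subtype.mk.injEq]
      rw [← pow_apply_mod hpn k, hk]
  rw [← Nat.card_eq_of_bijective _ hbij, Nat.card_eq_fintype_card, Fintype.card_fin]

def par (m : ℕ) : Bool := decide (m % 2 = 1)

theorem par_add (a b : ℕ) : par (a + b) = xor (par a) (par b) := by
  unfold par
  rcases Nat.mod_two_eq_zero_or_one a with ha | ha <;>
    rcases Nat.mod_two_eq_zero_or_one b with hb | hb <;>
      simp [Nat.add_mod, ha, hb]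

theorem nb_pow_apply (k : ℕ) (x : Bool) : (nb ^ k) x = xor (par k) x := by
  have h2 : (nb ^ 2) x = x := by
    rw [pow_two, mul_apply]; simp
  rw [pow_apply_mod h2 k]
  unfold par
  rcases Nat.mod_two_eq_zero_or_one k with h | h <;> rw [h]
  · simp
  · simp [pow_one]

theorem cyc_prodCongr_nb (f : Perm D)
    (hev : ∀ d, Even (Function.minimalPeriod (⇑f) d)) :
    cyc (Equiv.prodCongr f nb) = 2 * cyc f := by
  classical
  set s := sameCycleSetoid f with hs
  have hK : ∀ z : D, ∃ k : ℕ, (f ^ k) ((Quotient.mk s z).out) = z := by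
    intro z
    have hsc : f.SameCycle ((Quotient.mk s z).out) z :=
      Quotient.exact (Quotient.out_eq (Quotient.mk s z))
    obtain ⟨i, _, hi⟩ := hsc.exists_pow_eq'
    exact ⟨i, hi⟩
  choose K hKs using hK
  have hmod2 : ∀ (z w : D) (j : ℕ), (f ^ j) z = w → par (j + K z) = par (K w) := by
    intro z w j hj
    have hsczw : f.SameCycle z w := sameCycle_of_pow_nat hj
    have hq : Quotient.mk s z = Quotient.mk s w := Quotient.sound hsczw
    have h1 : (f ^ (j + K z)) ((Quotient.mk s z).out) = w := by
      rw [pow_add, mul_apply, hKs z, hj]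
    have h2 : (f ^ (K w)) ((Quotient.mk s z).out) = w := by
      rw [hq]; exact hKs w
    have := cong_mod_period (h1.trans h2.symm)
    set n := Function.minimalPeriod (⇑f) ((Quotient.mk s z).out) with hn
    have h2n : 2 ∣ n := even_iff_two_dvd.mp (hev _)
    have hmeq : (j + K z) % 2 = (K w) % 2 :=
      Nat.ModEq.of_dvd h2n this
    unfold par
    rw [hmeq]
  -- the function to the product
  have hresp : ∀ u v : D × Bool, Equiv.Perm.SameCycle (Equiv.prodCongr f nb) u v →
      ((Quotient.mk s u.1, xor (par (K u.1)) u.2) : Quotient s × Bool) =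
        (Quotient.mk s v.1, xor (par (K v.1)) v.2) := by
    intro u v h
    obtain ⟨k, _, hk⟩ := h.exists_pow_eq'
    rw [prodCongr_pow_apply] at hk
    have h1 : (f ^ k) u.1 = v.1 := congrArg Prod.fst hk
    have h2 : (nb ^ k) u.2 = v.2 := congrArg Prod.snd hk
    rw [nb_pow_apply] at h2
    refine Prod.ext (Quotient.sound (sameCycle_of_pow_nat h1)) ?_
    have hpar := hmod2 u.1 v.1 k h1
    rw [par_add] at hpar
    simp only []
    rw [← h2, ← hpar]
    cases par k <;> cases par (K u.1) <;> cases u.2 <;> rfl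
  have hbij : Function.Bijective (Quotient.lift
      (fun (u : D × Bool) => ((Quotient.mk s u.1 : Quotient s), xor (par (K u.1)) u.2))
      hresp :
      Quotient (sameCycleSetoid (Equiv.prodCongr f nb)) → Quotient s × Bool) := by
    constructor
    · intro q1 q2
      obtain ⟨u, rfl⟩ := Quotient.exists_rep q1
      obtain ⟨v, rfl⟩ := Quotient.exists_rep q2
      intro h
      replace h := Prod.mk.inj h
      obtain ⟨h1, h2⟩ := h
      obtain ⟨j, hj⟩ : ∃ j : ℕ, (f ^ j) u.1 = v.1 := by
        obtain ⟨i, _, hi⟩ := (Quotient.exact h1).exists_pow_eq'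
        exact ⟨i, hi⟩
      have hpar := hmod2 u.1 v.1 j hj
      rw [par_add] at hpar
      refine Quotient.sound (sameCycle_of_pow_nat (k := j) ?_)
      rw [prodCongr_pow_apply, hj, nb_pow_apply]
      refine Prod.ext rfl ?_
      simp only []
      rw [← hpar] at h2
      revert h2
      cases par j <;> cases par (K u.1) <;> cases u.2 <;> cases v.2 <;> simp
    · rintro ⟨q, x⟩
      obtain ⟨z, rfl⟩ := Quotient.exists_rep q
      refine ⟨Quotient.mk _ (z, xor (par (K z)) x), ?_⟩
      show ((Quotient.mk s z : Quotient s), xor (par (K z)) (xor (par (K z)) x)) = (Quotient.mk s z, x)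
      refine Prod.ext rfl ?_
      simp only []
      cases par (K z) <;> cases x <;> rfl
  have := Nat.card_eq_of_bijective _ hbij
  rw [Nat.card_prod] at this
  simp only [Nat.card_eq_fintype_card (α := Bool), Fintype.card_bool] at this
  rw [cyc, cyc, this]
  ring

theorem deck {σ' α' : Perm D} {u v : D × Bool}
    (h : (reachSetoid (Equiv.prodCongr σ' (Equiv.refl Bool)) (Equiv.prodCongr α' nb)).r u v) :
    (reachSetoid (Equiv.prodCongr σ' (Equiv.refl Bool)) (Equiv.prodCongr α' nb)).r
      (u.1, !u.2) (v.1, !v.2) := by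
  set S := reachSetoid (Equiv.prodCongr σ' (Equiv.refl Bool)) (Equiv.prodCongr α' nb)
  induction h with
  | rel a b hab =>
    rcases hab with hab | hab
    · subst hab; exact Relation.EqvGen.rel _ _ (Or.inl rfl)
    · subst hab; exact Relation.EqvGen.rel _ _ (Or.inr rfl)
  | refl a => exact S.refl _
  | symm a b _ ih => exact S.symm ih
  | trans a b c _ _ ih1 ih2 => exact S.trans ih1 ih2

theorem lift_reach {σ' α' : Perm D} {a b : D} (h : (reachSetoid σ' α').r a b) :
    ∀ x : Bool, ∃ y : Bool,
      (reachSetoid (Equiv.prodCongr σ' (Equiv.refl Bool)) (Equiv.prodCongr α' nb)).r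
        (a, x) (b, y) := by
  set S := reachSetoid (Equiv.prodCongr σ' (Equiv.refl Bool)) (Equiv.prodCongr α' nb)
  induction h with
  | rel a b hab =>
    intro x
    rcases hab with hab | hab
    · subst hab; exact ⟨x, Relation.EqvGen.rel _ _ (Or.inl rfl)⟩
    · subst hab; exact ⟨!x, Relation.EqvGen.rel _ _ (Or.inr rfl)⟩
  | refl a => exact fun x => ⟨x, S.refl _⟩
  | symm a b _ ih =>
    intro x
    obtain ⟨y0, h0⟩ := ih false
    by_cases hxy : x = y0
    · subst hxy; exact ⟨false, S.symm h0⟩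
    · have hx : x = !y0 := by cases x <;> cases y0 <;> simp_all
      subst hx
      exact ⟨true, S.symm (deck h0)⟩
  | trans a b c _ _ ih1 ih2 =>
    intro x
    obtain ⟨y, h1⟩ := ih1 x
    obtain ⟨z, h2⟩ := ih2 y
    exact ⟨z, S.trans h1 h2⟩

theorem comps_dc_lt {σ' α' : Perm D} {d₀ : D}
    (hcol : (reachSetoid (Equiv.prodCongr σ' (Equiv.refl Bool)) (Equiv.prodCongr α' nb)).r
      (d₀, false) (d₀, true)) :
    comps (Equiv.prodCongr σ' (Equiv.refl Bool)) (Equiv.prodCongr α' nb) + 1 ≤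
      2 * comps σ' α' := by
  classical
  set S := reachSetoid (Equiv.prodCongr σ' (Equiv.refl Bool)) (Equiv.prodCongr α' nb) with hS
  set R := reachSetoid σ' α' with hR
  have presp : ∀ u v : D × Bool, S.r u v →
      (Quotient.mk R u.1 : Quotient R) = Quotient.mk R v.1 := by
    intro u v h
    induction h with
    | rel a b hab =>
      rcases hab with hab | hab
      · subst hab; exact Quotient.sound (Relation.EqvGen.rel _ _ (Or.inl rfl))
      · subst hab; exact Quotient.sound (Relation.EqvGen.rel _ _ (Or.inr rfl))
    | refl a => rfl
    | symm a b _ ih => exact ih.symm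
    | trans a b c _ _ ih1 ih2 => exact ih1.trans ih2
  have hsurj : ∀ e : D, Function.Surjective
      (fun x : Bool => (⟨Quotient.mk S (e, x), rfl⟩ :
        {q : Quotient S // Quotient.lift (fun u : D × Bool => (Quotient.mk R u.1 : Quotient R))
          presp q = Quotient.mk R e})) := by
    intro e
    rintro ⟨q, hq⟩
    obtain ⟨u, rfl⟩ := Quotient.exists_rep q
    simp only [Quotient.lift_mk] at hq
    have hre : R.r u.1 e := Quotient.exact hq
    obtain ⟨y, hy⟩ := lift_reach hre u.2
    exact ⟨y, Subtype.ext (Quotient.sound hy).symm⟩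
  have hfib_le : ∀ c : Quotient R, Fintype.card
      {q : Quotient S // Quotient.lift (fun u : D × Bool => (Quotient.mk R u.1 : Quotient R))
        presp q = c} ≤ 2 := by
    intro c
    obtain ⟨e, rfl⟩ := Quotient.exists_rep c
    have := Fintype.card_le_of_surjective _ (hsurj e)
    simpa using this
  have hfib0 : Fintype.card
      {q : Quotient S // Quotient.lift (fun u : D × Bool => (Quotient.mk R u.1 : Quotient R))
        presp q = Quotient.mk R d₀} ≤ 1 := by
    refine Fintype.card_le_one_iff.mpr ?_
    intro q1 q2
    obtain ⟨x1, rfl⟩ := hsurj d₀ q1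
    obtain ⟨x2, rfl⟩ := hsurj d₀ q2
    have : (Quotient.mk S (d₀, x1)) = Quotient.mk S (d₀, x2) := by
      cases x1 <;> cases x2
      · rfl
      · exact Quotient.sound hcol
      · exact (Quotient.sound hcol).symm
      · rfl
    exact Subtype.ext this
  have htot : Fintype.card (Quotient S) =
      ∑ c : Quotient R, Fintype.card
        {q : Quotient S // Quotient.lift (fun u : D × Bool => (Quotient.mk R u.1 : Quotient R))
          presp q = c} := by
    rw [← Fintype.card_sigma]
    exact Fintype.card_congr (Equiv.sigmaFiberEquiv _).symm
  have hbound : ∑ c : Quotient R, Fintype.card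
      {q : Quotient S // Quotient.lift (fun u : D × Bool => (Quotient.mk R u.1 : Quotient R))
        presp q = c} ≤ 1 + 2 * (Fintype.card (Quotient R) - 1) := by
    rw [← Finset.add_sum_erase _ _ (Finset.mem_univ (Quotient.mk R d₀))]
    have h1 : ∑ c ∈ Finset.univ.erase (Quotient.mk R d₀), Fintype.card
        {q : Quotient S // Quotient.lift (fun u : D × Bool => (Quotient.mk R u.1 : Quotient R))
          presp q = c} ≤ 2 * (Fintype.card (Quotient R) - 1) := by
      calc _ ≤ ∑ _c ∈ Finset.univ.erase (Quotient.mk R d₀), 2 :=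
            Finset.sum_le_sum (fun c _ => hfib_le c)
        _ = 2 * (Fintype.card (Quotient R) - 1) := by
            rw [Finset.sum_const, Finset.card_erase_of_mem (Finset.mem_univ _),
              Finset.card_univ, smul_eq_mul]
            ring
    omega
  have hpos : 0 < Fintype.card (Quotient R) :=
    Fintype.card_pos_iff.mpr ⟨Quotient.mk R d₀⟩
  have : Fintype.card (Quotient S) + 1 ≤ 2 * Fintype.card (Quotient R) := by omega
  show Nat.card (Quotient S) + 1 ≤ 2 * Nat.card (Quotient R)
  rwa [Nat.card_eq_fintype_card, Nat.card_eq_fintype_card]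

theorem exists_flip {Q : Type*} (t : Q → Q) (hinv : ∀ q, t (t q) = q)
    (hfpf : ∀ q, t q ≠ q) : ∃ P : Q → Bool, ∀ q, P (t q) ≠ P q := by
  classical
  have hequiv : Equivalence (fun u v : Q => v = u ∨ v = t u) := by
    refine ⟨fun q => Or.inl rfl, ?_, ?_⟩
    · rintro u v (rfl | rfl)
      · exact Or.inl rfl
      · exact Or.inr (hinv u).symm
    · rintro u v w (rfl | rfl) (rfl | rfl)
      · exact Or.inl rfl
      · exact Or.inr rfl
      · exact Or.inr rfl
      · exact Or.inl (hinv u)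
  set s2 : Setoid Q := ⟨fun u v => v = u ∨ v = t u, hequiv⟩ with hs2
  refine ⟨fun q => decide ((Quotient.mk s2 q).out = q), ?_⟩
  intro q
  have ho : Quotient.mk s2 (t q) = Quotient.mk s2 q :=
    Quotient.sound (Or.inr (hinv q).symm)
  have hoq : q = (Quotient.mk s2 q).out ∨ q = t ((Quotient.mk s2 q).out) :=
    Quotient.exact (Quotient.out_eq (Quotient.mk s2 q))
  show decide ((Quotient.mk s2 (t q)).out = t q) ≠ decide ((Quotient.mk s2 q).out = q)
  rw [ho]
  rcases hoq with h | h
  · have h2 : ¬ (q = t q) := fun hh => hfpf q hh.symm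
    simp [← h, h2]
  · have h4 : t q = (Quotient.mk s2 q).out := by
      conv_lhs => rw [h]
      rw [hinv]
    have h3 : ¬ ((Quotient.mk s2 q).out = q) := by
      intro hh
      rw [hh] at h
      exact hfpf q h.symm
    simp [← h4, h3, hfpf q]

end BipAux
open BipAux



/-- A plane multigraph in which every face has even degree
(the boundary walk of every face has even length) is bipartite: there is
a 2-coloring of the vertices (a `Bool`-valued function on darts, constant
on the rotation at each vertex) such that the two endpoints of every edge
receive different colors. -/
theorem bipartite_of_even_faces (M : CombMap) (hplanar : M.Planar)
    (heven : ∀ d : M.D, Even (Nat.card {d' : M.D // M.SameFace d d'})) :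
    ∃ c : M.D → Bool, (∀ d, c (M.σ d) = c d) ∧ ∀ d, c (M.α d) ≠ c d := by
  classical
  set sg : Equiv.Perm (M.D × Bool) := Equiv.prodCongr M.σ (Equiv.refl Bool) with hsg
  set al : Equiv.Perm (M.D × Bool) := Equiv.prodCongr M.α nb with halp
  have hnc : ∀ d : M.D, ¬ (BipAux.reachSetoid sg al).r (d, false) (d, true) := by
    intro d hcol
    have hlt : comps sg al + 1 ≤ 2 * comps M.σ M.α := comps_dc_lt hcol
    have hV : cyc sg = 2 * cyc M.σ := cyc_prodCongr_refl M.σ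
    have hE2 : 2 * cyc M.α = Fintype.card M.D := cyc_invol M.α_invol M.α_fpf
    have hal_invol : ∀ u : M.D × Bool, al (al u) = u := fun u =>
      Prod.ext (M.α_invol u.1) (Bool.not_not u.2)
    have hal_fpf : ∀ u : M.D × Bool, al u ≠ u := fun u h =>
      M.α_fpf u.1 (congrArg Prod.fst h)
    have hEt : 2 * cyc al = Fintype.card (M.D × Bool) := cyc_invol hal_invol hal_fpf
    have hevenper : ∀ d' : M.D, Even (Function.minimalPeriod (⇑M.φ) d') := by
      intro d'
      have h : Even (Nat.card {x : M.D // M.φ.SameCycle d' x}) := heven d'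
      rwa [orbit_card_eq_minimalPeriod M.φ d'] at h
    have hsgal : sg * al = Equiv.prodCongr M.φ nb := Equiv.ext fun u => rfl
    have hF : cyc (sg * al) = 2 * cyc M.φ := by
      rw [hsgal]; exact cyc_prodCongr_nb M.φ hevenper
    have heuler := euler_ineq sg al
    have hcardT : Fintype.card (M.D × Bool) = Fintype.card M.D * 2 := by simp
    have hplanar' : (M.nV : ℤ) - M.nE + M.nF = 2 * M.nC := hplanar
    have hnV : M.nV = cyc M.σ := rfl
    have hnE : M.nE = cyc M.α := rfl
    have hnF : M.nF = cyc M.φ := rfl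
    have hnC : M.nC = comps M.σ M.α := rfl
    rw [hnV, hnE, hnF, hnC] at hplanar'
    rw [hV, hF] at heuler
    omega
  set S := BipAux.reachSetoid sg al with hS
  have tresp : ∀ u v : M.D × Bool, S.r u v →
      (Quotient.mk S (u.1, !u.2)) = Quotient.mk S (v.1, !v.2) :=
    fun u v h => Quotient.sound (deck h)
  have htinv : ∀ q : Quotient S,
      Quotient.lift (fun u : M.D × Bool => Quotient.mk S (u.1, !u.2)) tresp
        (Quotient.lift (fun u : M.D × Bool => Quotient.mk S (u.1, !u.2)) tresp q) = q := by
    intro q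
    obtain ⟨u, rfl⟩ := Quotient.exists_rep q
    show Quotient.mk S ((u.1, !u.2).1, !(u.1, !u.2).2) = Quotient.mk S u
    rw [show ((u.1, !u.2).1, !(u.1, !u.2).2) = u from by simp]
  have htfpf : ∀ q : Quotient S,
      Quotient.lift (fun u : M.D × Bool => Quotient.mk S (u.1, !u.2)) tresp q ≠ q := by
    intro q h
    obtain ⟨u, rfl⟩ := Quotient.exists_rep q
    obtain ⟨d, x⟩ := u
    have hx := Quotient.exact h
    cases x
    · exact hnc d (S.symm hx)
    · exact hnc d hx
  obtain ⟨P, hP⟩ := exists_flip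
    (Quotient.lift (fun u : M.D × Bool => Quotient.mk S (u.1, !u.2)) tresp) htinv htfpf
  refine ⟨fun d => P (Quotient.mk S (d, false)), fun d => ?_, fun d => ?_⟩
  · have h0 : Quotient.mk S (M.σ d, false) = Quotient.mk S (d, false) :=
      Quotient.sound (S.symm (Relation.EqvGen.rel _ _ (Or.inl rfl)))
    exact congrArg P h0
  · have h1 : Quotient.mk S (M.α d, false) =
        Quotient.lift (fun u : M.D × Bool => Quotient.mk S (u.1, !u.2)) tresp
          (Quotient.mk S (d, false)) := by
      show Quotient.mk S (M.α d, false) = Quotient.mk S (d, true)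
      exact Quotient.sound (S.symm (Relation.EqvGen.rel _ _ (Or.inr rfl)))
    intro hc
    apply hP (Quotient.mk S (d, false))
    rw [← h1]
    exact hc
end

section
/- Let C be a cycle of odd length d ≥ 5 drawn in the plane. In any plane triangulation obtained from C by adding edges, some vertex of C is unhappy, i.e., there is no triangular face both of whose boundary edges at that vertex are edges of C. -/
/-- The plane combinatorial map of a cycle of length `n`: vertices are
`ZMod n`, each vertex `i` carries the dart `(i, true)` of the edge
towards `i+1` and the dart `(i, false)` of the edge towards `i-1`. -/
def cycleMap (n : ℕ) [NeZero n] : CombMap where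
  D := ZMod n × Bool
  σ := ⟨fun p => (p.1, !p.2), fun p => (p.1, !p.2),
        by intro p; simp, by intro p; simp⟩
  α := ⟨fun p => if p.2 then (p.1 + 1, false) else (p.1 - 1, true),
        fun p => if p.2 then (p.1 + 1, false) else (p.1 - 1, true),
        by rintro ⟨i, b⟩; cases b <;> simp,
        by rintro ⟨i, b⟩; cases b <;> simp⟩
  α_invol := by rintro ⟨i, b⟩; cases b <;> simp
  α_fpf := by rintro ⟨i, b⟩; cases b <;> simp

section Aux

variable (n : ℕ) [NeZero n] (M' : CombMap) (ι : (cycleMap n).D ↪ M'.D)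
  (hsub : CombMap.IsEdgeSubmap (cycleMap n) M' ι)

lemma cyc_sigma (p : ZMod n × Bool) : (cycleMap n).σ p = (p.1, !p.2) := rfl

lemma cyc_sigma_pow_fst (l : ℕ) (p : ZMod n × Bool) :
    (((cycleMap n).σ ^ l) p).1 = p.1 := by
  induction l with
  | zero => rfl
  | succ m ih =>
      erw [pow_succ', Equiv.Perm.mul_apply, cyc_sigma n]
      exact ih

lemma cyc_alpha_true (i : ZMod n) : (cycleMap n).α (i, true) = (i + 1, false) := rfl

lemma cyc_alpha_false (i : ZMod n) : (cycleMap n).α (i, false) = (i - 1, true) := rfl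

include hsub in
/-- If a nonnegative σ'-power of an embedded dart lands back in the range
of ι, then it is the embedding of a σ-power of the original dart. -/
lemma orbit_mem : ∀ m : ℕ, ∀ d : (cycleMap n).D,
    (M'.σ ^ m) (ι d) ∈ Set.range ι →
    ∃ l : ℕ, (M'.σ ^ m) (ι d) = ι (((cycleMap n).σ ^ l) d) := by
  intro m
  induction m using Nat.strong_induction_on with
  | _ m IH =>
    intro d hm
    obtain ⟨k, hk0, hk, hlt⟩ := hsub.rotation d
    rcases Nat.lt_or_ge m k with hmk | hmk
    · rcases Nat.eq_zero_or_pos m with rfl | hm0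
      · exact ⟨0, rfl⟩
      · exact absurd hm (hlt m hm0 hmk)
    · have hsplit : (M'.σ ^ m) (ι d) = (M'.σ ^ (m - k)) (ι ((cycleMap n).σ d)) := by
        rw [hk, ← Equiv.Perm.mul_apply, ← pow_add, Nat.sub_add_cancel hmk]
      rw [hsplit] at hm ⊢
      obtain ⟨l, hl⟩ := IH (m - k) (by omega) ((cycleMap n).σ d) hm
      refine ⟨l + 1, ?_⟩
      rw [hl, pow_succ, Equiv.Perm.mul_apply]

include hsub in
/-- Embedded darts at the same M'-vertex come from the same cycle vertex. -/
lemma same_vertex_fst {d e : (cycleMap n).D}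
    (h : M'.SameVertex (ι d) (ι e)) : d.1 = e.1 := by
  obtain ⟨m, -, hm⟩ := Equiv.Perm.SameCycle.exists_pow_eq' h
  obtain ⟨l, hl⟩ := orbit_mem n M' ι hsub m d ⟨e, hm.symm⟩
  have : ι e = ι (((cycleMap n).σ ^ l) d) := by rw [← hm, hl]
  have he : e = ((cycleMap n).σ ^ l) d := ι.injective this
  erw [he, cyc_sigma_pow_fst]

include hsub in
/-- If σ' of an embedded dart is embedded, it is the next cycle dart. -/
lemma sigma_step {d : (cycleMap n).D} (h : M'.σ (ι d) ∈ Set.range ι) :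
    M'.σ (ι d) = ι ((cycleMap n).σ d) := by
  obtain ⟨k, hk0, hk, hlt⟩ := hsub.rotation d
  rcases Nat.lt_or_ge k 2 with hk2 | hk2
  · interval_cases k
    · simpa using hk.symm
  · exfalso
    refine hlt 1 one_pos (by omega) ?_
    simpa using h

end Aux

/-- Let `C` be a cycle of odd length `n ≥ 5` drawn in the
plane.  In any plane triangulation `M'` (without loops) obtained from
`C` by adding edges, some vertex `i` of `C` is unhappy: no angle of `M'`
at `i` (pair of darts consecutive in the rotation) consists of two darts
of `C`.  (All faces of `M'` are triangles, so this says exactly that no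
triangular face of `M'` has its angle at `i` formed by two edges of
`C`.) -/
theorem odd_cycle_has_unhappy_vertex (n : ℕ) [NeZero n]
    (hn : 5 ≤ n) (hodd : Odd n)
    (M' : CombMap) (hpl : M'.Planar) (hloop : M'.Loopless)
    (htri : M'.Triangulated)
    (ι : (cycleMap n).D ↪ M'.D)
    (hsub : CombMap.IsEdgeSubmap (cycleMap n) M' ι) :
    ∃ i : ZMod n, ¬ M'.HappyAt (Set.range ι) (ι ((i, true) : ZMod n × Bool)) := by
  by_contra hcon
  push_neg at hcon
  -- `t i` : at vertex `i` the angle on one side of the cycle is a face corner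
  -- `u i` : same on the other side
  set t : ZMod n → Prop := fun i => M'.σ (ι (i, false)) = ι (i, true) with ht
  set u : ZMod n → Prop := fun i => M'.σ (ι (i, true)) = ι (i, false) with hu
  -- every vertex is happy on one of the two sides
  have htu : ∀ i : ZMod n, t i ∨ u i := by
    intro i
    obtain ⟨a, hav, ⟨e, rfl⟩, hs⟩ := hcon i
    have h1 : ((i, true) : ZMod n × Bool).1 = e.1 := same_vertex_fst n M' ι hsub hav
    have hstep := sigma_step n M' ι hsub hs
    obtain ⟨j, b⟩ := e
    simp only at h1
    subst h1
    cases b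
    · left; rw [ht]; rw [cyc_sigma] at hstep; exact hstep
    · right; rw [hu]; rw [cyc_sigma] at hstep; exact hstep
  have cast3 : ∀ i : ZMod n, i + 3 = i → False := by
    intro i h
    have h3 : (3 : ZMod n) = 0 := by
      have := add_eq_left.mp h
      exact this
    have h3' : ((3 : ℕ) : ZMod n) = 0 := by exact_mod_cast h3
    have := (ZMod.natCast_eq_zero_iff 3 n).mp h3'
    have := Nat.le_of_dvd (by norm_num) this
    omega
  -- no two consecutive `t`'s
  have ht2 : ∀ i : ZMod n, t (i + 1) → t (i + 2) → False := by
    intro i h1 h2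
    have e1 : M'.φ (ι (i, true)) = ι (i + 1, true) := by
      show M'.σ (M'.α (ι (i, true))) = _
      erw [← hsub.alpha_comm, cyc_alpha_true]
      exact h1
    have e2 : M'.φ (ι (i + 1, true)) = ι (i + 2, true) := by
      show M'.σ (M'.α (ι (i + 1, true))) = _
      erw [← hsub.alpha_comm, cyc_alpha_true]
      have hr : i + 1 + 1 = i + 2 := by ring
      rw [hr]
      exact h2
    have e3 : M'.φ (ι (i + 2, true)) = ι (i, true) := by
      have h3 := (htri (ι (i, true))).1
      rw [e1, e2] at h3
      exact h3
    have e4 : M'.σ (ι (i + 3, false)) = ι (i, true) := by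
      have ha : M'.α (ι (i + 2, true)) = ι (i + 3, false) := by
        erw [← hsub.alpha_comm, cyc_alpha_true]
        have hr : i + 2 + 1 = i + 3 := by ring
        rw [hr]
      have := e3
      show M'.σ (ι (i + 3, false)) = ι (i, true)
      rw [← ha]
      exact this
    have hsv : M'.SameVertex (ι (i + 3, false)) (ι (i, true)) := ⟨1, by simpa using e4⟩
    have hfst := same_vertex_fst n M' ι hsub hsv
    exact cast3 i hfst
  -- no two consecutive `u`'s
  have hu2 : ∀ i : ZMod n, u (i + 1) → u (i + 2) → False := by
    intro i h1 h2
    have e1 : M'.φ (ι (i + 3, false)) = ι (i + 2, false) := by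
      show M'.σ (M'.α (ι (i + 3, false))) = _
      erw [← hsub.alpha_comm, cyc_alpha_false]
      have hr : i + 3 - 1 = i + 2 := by ring
      rw [hr]
      exact h2
    have e2 : M'.φ (ι (i + 2, false)) = ι (i + 1, false) := by
      show M'.σ (M'.α (ι (i + 2, false))) = _
      erw [← hsub.alpha_comm, cyc_alpha_false]
      have hr : i + 2 - 1 = i + 1 := by ring
      rw [hr]
      exact h1
    have e3 : M'.φ (ι (i + 1, false)) = ι (i + 3, false) := by
      have h3 := (htri (ι (i + 3, false))).1
      rw [e1, e2] at h3
      exact h3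
    have e4 : M'.σ (ι (i, true)) = ι (i + 3, false) := by
      have ha : M'.α (ι (i + 1, false)) = ι (i, true) := by
        erw [← hsub.alpha_comm, cyc_alpha_false]
        have hr : i + 1 - 1 = i := by ring
        rw [hr]
      show M'.σ (ι (i, true)) = ι (i + 3, false)
      rw [← ha]
      exact e3
    have hsv : M'.SameVertex (ι (i, true)) (ι (i + 3, false)) := ⟨1, by simpa using e4⟩
    have hfst := same_vertex_fst n M' ι hsub hsv
    exact cast3 i hfst.symm
  have hnt : ∀ j : ZMod n, t j → ¬ t (j + 1) := by
    intro j hj hj1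
    have h1 : j - 1 + 1 = j := by ring
    have h2 : j - 1 + 2 = j + 1 := by ring
    exact ht2 (j - 1) (by rw [h1]; exact hj) (by rw [h2]; exact hj1)
  have hnu : ∀ j : ZMod n, u j → ¬ u (j + 1) := by
    intro j hj hj1
    have h1 : j - 1 + 1 = j := by ring
    have h2 : j - 1 + 2 = j + 1 := by ring
    exact hu2 (j - 1) (by rw [h1]; exact hj) (by rw [h2]; exact hj1)
  have tstep : ∀ j : ZMod n, t j → t (j + 2) := by
    intro j hj
    have h1 : u (j + 1) := (htu (j + 1)).resolve_left (hnt j hj)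
    have h2 : ¬ u (j + 1 + 1) := hnu (j + 1) h1
    have hr : j + 1 + 1 = j + 2 := by ring
    rw [hr] at h2
    exact (htu (j + 2)).resolve_right h2
  have ustep : ∀ j : ZMod n, u j → u (j + 2) := by
    intro j hj
    have h1 : t (j + 1) := (htu (j + 1)).resolve_right (hnu j hj)
    have h2 : ¬ t (j + 1 + 1) := hnt (j + 1) h1
    have hr : j + 1 + 1 = j + 2 := by ring
    rw [hr] at h2
    exact (htu (j + 2)).resolve_left h2
  have tpow : ∀ k : ℕ, ∀ j : ZMod n, t j → t (j + (2 * k : ℕ)) := by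
    intro k
    induction k with
    | zero => intro j hj; simpa using hj
    | succ m ih =>
        intro j hj
        have := tstep _ (ih j hj)
        have hr : (j + (2 * m : ℕ)) + 2 = j + ((2 * (m + 1) : ℕ) : ZMod n) := by
          push_cast; ring
        rw [hr] at this
        exact this
  have upow : ∀ k : ℕ, ∀ j : ZMod n, u j → u (j + (2 * k : ℕ)) := by
    intro k
    induction k with
    | zero => intro j hj; simpa using hj
    | succ m ih =>
        intro j hj
        have := ustep _ (ih j hj)
        have hr : (j + (2 * m : ℕ)) + 2 = j + ((2 * (m + 1) : ℕ) : ZMod n) := by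
          push_cast; ring
        rw [hr] at this
        exact this
  obtain ⟨m, hm⟩ := hodd
  have hcast : ((2 * (m + 1) : ℕ) : ZMod n) = 1 := by
    have h1 : (2 * (m + 1) : ℕ) = n + 1 := by omega
    rw [h1]
    push_cast
    rw [ZMod.natCast_self]
    ring
  rcases htu 0 with h0 | h0
  · have h1 : t ((0 : ZMod n) + ((2 * (m + 1) : ℕ) : ZMod n)) := tpow (m + 1) 0 h0
    rw [hcast] at h1
    exact hnt 0 h0 h1
  · have h1 : u ((0 : ZMod n) + ((2 * (m + 1) : ℕ) : ZMod n)) := upow (m + 1) 0 h0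
    rw [hcast] at h1
    exact hnu 0 h0 h1
end

section
/- Let G be a planar multigraph obtained from n/4 disjoint copies of K_4 by replacing every edge of each K_4 by a pair of parallel edges (forming a bigon) and then adding arbitrary further edges to make the graph connected and planar. Then any vertex set S that hits every face of G satisfies |S| ≥ (3/4)n. -/
/-- The number of vertices of `M` represented by darts in `S`. -/
noncomputable def CombMap.vertexCount (M : CombMap) (S : Set M.D) : ℕ :=
  Nat.card {v : Quotient (M.orbitSetoid M.σ) //
    ∃ d ∈ S, Quotient.mk (M.orbitSetoid M.σ) d = v}

section AuxBigon

private lemma perm_label_zpow' {D : Type} (g : Equiv.Perm D) {β : Type*} (ℓ : D → β)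
    (h : ∀ d, ℓ (g d) = ℓ d) (d : D) (k : ℤ) : ℓ ((g ^ k) d) = ℓ d := by
  have hinv : ∀ x, ℓ (g⁻¹ x) = ℓ x := by
    intro x
    conv_rhs => rw [← show g (g⁻¹ x) = x from g.apply_symm_apply x]
    rw [h]
  induction k using Int.induction_on with
  | zero => simp
  | succ n ih => rw [show ((n:ℤ)+1) = 1 + n by ring, zpow_add, zpow_one,
      Equiv.Perm.mul_apply, h, ih]
  | pred n ih => rw [show (-(n:ℤ)-1) = -1 + -n by ring, zpow_add,
      Equiv.Perm.mul_apply, zpow_neg_one, hinv, ih]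

private lemma perm_two_cycle_mem' {D : Type} (g : Equiv.Perm D) (d : D)
    (h2 : g (g d) = d) (k : ℤ) : (g ^ k) d = d ∨ (g ^ k) d = g d := by
  induction k using Int.induction_on with
  | zero => left; simp
  | succ n ih =>
    rw [show ((n:ℤ)+1) = 1 + n by ring, zpow_add, zpow_one, Equiv.Perm.mul_apply]
    rcases ih with h | h <;> rw [h]
    · right; rfl
    · left; exact h2
  | pred n ih =>
    rw [show (-(n:ℤ)-1) = -1 + -n by ring, zpow_add, Equiv.Perm.mul_apply, zpow_neg_one]
    rcases ih with h | h <;> rw [h]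
    · right
      apply g.injective
      rw [show g (g⁻¹ d) = d from g.apply_symm_apply d, h2]
    · left
      exact g.symm_apply_apply d

end AuxBigon

/-- Let `G` be a connected plane multigraph on `n = 4m`
vertices, labelled by `Fin m × Fin 4` (`m` copies of `K₄`, the labelling
`ℓ` is constant on rotations and distinguishes vertices), such that for
every copy `i` and every pair of distinct vertices `a ≠ b` of that copy
there is a bigon (a face of degree 2) whose two boundary darts sit at
`(i,a)` and `(i,b)` — i.e. every edge of each `K₄` has been replaced by a
pair of parallel edges, and further edges were added arbitrarily to make
the graph connected and plane.  Then any set `S` of vertices (darts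
closed under the rotation) hitting every face satisfies
`|S| ≥ 3m = (3/4)·n`. -/
theorem bigon_K4_lower_bound (m : ℕ) (hm : 0 < m) (M : CombMap)
    (hpl : M.Planar) (hconn : M.Connected)
    (ℓ : M.D → Fin m × Fin 4)
    (hconst : ∀ d, ℓ (M.σ d) = ℓ d)
    (hsep : ∀ d d', ℓ d = ℓ d' → M.SameVertex d d')
    (hn : M.nV = 4 * m)
    (hbigon : ∀ (i : Fin m) (a b : Fin 4), a ≠ b →
      ∃ d : M.D, M.φ (M.φ d) = d ∧ M.φ d ≠ d ∧
        ℓ d = (i, a) ∧ ℓ (M.φ d) = (i, b)) :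
    ∀ S : Set M.D, (∀ d, d ∈ S ↔ M.σ d ∈ S) →
      (∀ d : M.D, ∃ e ∈ S, M.SameFace d e) →
      3 * m ≤ M.vertexCount S := by
  intro S hSσ hSface
  classical
  -- ℓ is constant on vertex orbits
  have hlv : ∀ d d' : M.D, M.SameVertex d d' → ℓ d' = ℓ d := by
    rintro d d' ⟨k, rfl⟩
    exact perm_label_zpow' M.σ ℓ hconst d k
  -- the set of labels hit by S
  set T : Finset (Fin m × Fin 4) :=
    Finset.univ.filter (fun p => ∃ d ∈ S, ℓ d = p) with hTdef
  -- each copy contributes at least 3 labels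
  have hA : ∀ i : Fin m,
      3 ≤ (Finset.univ.filter (fun a : Fin 4 => (i, a) ∈ T)).card := by
    intro i
    set A : Finset (Fin 4) := Finset.univ.filter (fun a => (i, a) ∈ T) with hAdef
    have hcompl : Aᶜ.card ≤ 1 := by
      apply Finset.card_le_one.2
      intro a ha b hb
      by_contra hab
      obtain ⟨d, hφ2, hφne, hda, hdb⟩ := hbigon i a b hab
      obtain ⟨e, heS, hef⟩ := hSface d
      obtain ⟨k, hk⟩ := hef
      have hmem : e = d ∨ e = M.φ d := by
        rcases perm_two_cycle_mem' M.φ d hφ2 k with h | h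
        · left; rw [← hk, h]
        · right; rw [← hk, h]
      have hor : (i, a) ∈ T ∨ (i, b) ∈ T := by
        rcases hmem with h' | h'
        · left
          simp only [hTdef, Finset.mem_filter, Finset.mem_univ, true_and]
          exact ⟨e, heS, by rw [h']; exact hda⟩
        · right
          simp only [hTdef, Finset.mem_filter, Finset.mem_univ, true_and]
          exact ⟨e, heS, by rw [h']; exact hdb⟩
      rcases hor with h | h
      · exact (Finset.mem_compl.1 ha) (by simp [hAdef, h])
      · exact (Finset.mem_compl.1 hb) (by simp [hAdef, h])
    have hsum := Finset.card_add_card_compl A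
    simp only [Fintype.card_fin] at hsum
    omega
  -- total: T.card ≥ 3m
  have hT3 : 3 * m ≤ T.card := by
    have hcount : T.card = ∑ i : Fin m,
        (T.filter (fun p => p.1 = i)).card :=
      Finset.card_eq_sum_card_fiberwise (fun p _ => Finset.mem_univ p.1)
    have hfib : ∀ i : Fin m,
        (Finset.univ.filter (fun a : Fin 4 => (i, a) ∈ T)).card
          ≤ (T.filter (fun p => p.1 = i)).card := by
      intro i
      apply Finset.card_le_card_of_injOn (fun a => (i, a))
      · intro a ha
        simp only [Finset.mem_coe, Finset.mem_filter, Finset.mem_univ, true_and] at ha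
        exact Finset.mem_filter.2 ⟨ha, rfl⟩
      · intro a _ b _ hab
        exact (Prod.ext_iff.1 hab).2
    calc 3 * m = ∑ _i : Fin m, 3 := by simp [mul_comm]
      _ ≤ ∑ i : Fin m, (T.filter (fun p => p.1 = i)).card :=
          Finset.sum_le_sum (fun i _ => le_trans (hA i) (hfib i))
      _ = T.card := hcount.symm
  -- inject T into the counted vertices
  refine le_trans hT3 ?_
  unfold CombMap.vertexCount
  have hch : ∀ p : {p // p ∈ T}, ∃ d, d ∈ S ∧ ℓ d = p.1 := by
    rintro ⟨p, hp⟩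
    simp only [hTdef, Finset.mem_filter, Finset.mem_univ, true_and] at hp
    obtain ⟨d, hd, hdl⟩ := hp
    exact ⟨d, hd, hdl⟩
  choose f hfS hfl using hch
  have hinj : Function.Injective
      (fun p : {p // p ∈ T} =>
        (⟨Quotient.mk (M.orbitSetoid M.σ) (f p), f p, hfS p, rfl⟩ :
          {v : Quotient (M.orbitSetoid M.σ) //
            ∃ d ∈ S, Quotient.mk (M.orbitSetoid M.σ) d = v})) := by
    intro p q hpq
    simp only [Subtype.mk.injEq] at hpq
    have hsame : M.SameVertex (f p) (f q) := Quotient.exact hpq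
    have heq : ℓ (f q) = ℓ (f p) := hlv _ _ hsame
    rw [hfl p, hfl q] at heq
    exact Subtype.ext heq.symm
  have hle := Nat.card_le_card_of_injective _ hinj
  rwa [Nat.card_eq_finsetCard] at hle
end
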